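/- arXiv:1411.3065 — 10 statements merged into one kernel-verified Lean document; each statement's English description precedes it below -/
import Mathlib

section
/- Define polynomials Δ_{i,j} ∈ ℚ[x_1,…,x_n,t] for n ≥ i ≥ j ≥ 1 by: Δ_{i,i} := x_i − i·t for 1 ≤ i ≤ n, and for i > j, Δ_{i,j} := (Σ_{ℓ=1}^{j} Δ_{i−j+ℓ−1, ℓ})·(x_j − x_i − t). Then for every pair (i,j) with n ≥ i ≥ j ≥ 1 one has f_{i,j} = Σ_{k=1}^{j} Δ_{i−j+k, k}. -/
open MvPolynomial Finset

/-- The variable `t` in `ℚ[x_1,…,x_n,t]`, realized as `MvPolynomial (Option (Fin n)) ℚ`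
with `t = X none`. -/
noncomputable def tv (n : ℕ) : MvPolynomial (Option (Fin n)) ℚ := X none

/-- The variable `x_k` (for `1 ≤ k ≤ n`) in `ℚ[x_1,…,x_n,t]`. -/
noncomputable def xv (n : ℕ) (k : ℕ) : MvPolynomial (Option (Fin n)) ℚ :=
  if h : k - 1 < n then X (some ⟨k - 1, h⟩) else 0

/-- `p_i = ∑_{k=1}^i (x_k - k t)`, with `p_0 = 0`. -/
noncomputable def pp (n : ℕ) (i : ℕ) : MvPolynomial (Option (Fin n)) ℚ :=
  ∑ k ∈ Finset.range i, (xv n (k + 1) - C ((k : ℚ) + 1) * tv n)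

/-- The polynomials `f_{i,j}`: `f_{i,0} = 0`, `f_{j,j} = p_j`, and
`f_{i,j} = f_{i-1,j-1} + (x_j - x_i - t) f_{i-1,j}` for `i > j ≥ 1`. -/
noncomputable def ff (n : ℕ) : ℕ → ℕ → MvPolynomial (Option (Fin n)) ℚ
  | _, 0 => 0
  | 0, _ + 1 => 0
  | i + 1, j + 1 =>
      if i = j then pp n (j + 1)
      else ff n i j + (xv n (j + 1) - xv n (i + 1) - tv n) * ff n i (j + 1)


/-- Define `Δ_{i,i} = x_i - i t` and, for `i > j`,
`Δ_{i,j} = (∑_{ℓ=1}^{j} Δ_{i-j+ℓ-1, ℓ}) (x_j - x_i - t)`.  Then for `n ≥ i ≥ j ≥ 1`,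
`f_{i,j} = ∑_{k=1}^{j} Δ_{i-j+k, k}`.
(The function `D` below carries the values `Δ_{i,j}`; the two hypotheses are exactly the
defining recursion, and they determine `D` on the domain `1 ≤ j ≤ i ≤ n`.  In the sums,
the summation index runs over `ℓ = ℓ'+1` and `k = k'+1` with `ℓ', k' ∈ range j`.) -/
theorem stmt2 (n : ℕ) (D : ℕ → ℕ → MvPolynomial (Option (Fin n)) ℚ)
    (hdiag : ∀ i : ℕ, 1 ≤ i → i ≤ n → D i i = xv n i - C (i : ℚ) * tv n)
    (hrec : ∀ i j : ℕ, 1 ≤ j → j < i → i ≤ n →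
      D i j = (∑ l ∈ Finset.range j, D (i - j + l) (l + 1)) * (xv n j - xv n i - tv n)) :
    ∀ i j : ℕ, 1 ≤ j → j ≤ i → i ≤ n →
      ff n i j = ∑ k ∈ Finset.range j, D (i - j + k + 1) (k + 1) := by
  intro i
  induction i with
  | zero => intro j hj hji _; omega
  | succ i ih =>
    intro j hj hji hin
    obtain ⟨j', rfl⟩ : ∃ j', j = j' + 1 := ⟨j - 1, by omega⟩
    by_cases hij : i = j'
    · subst hij
      rw [show ff n (i+1) (i+1) = pp n (i+1) from by simp [ff]]
      unfold pp
      apply Finset.sum_congr rfl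
      intro k hk
      simp only [Finset.mem_range] at hk
      rw [show i + 1 - (i+1) + k + 1 = k + 1 by omega,
        hdiag (k+1) (by omega) (by omega)]
      push_cast
      ring
    · have hji' : j' + 1 ≤ i := by omega
      rw [show ff n (i+1) (j'+1)
          = ff n i j' + (xv n (j'+1) - xv n (i+1) - tv n) * ff n i (j'+1) from by
        simp [ff, hij]]
      have h2 : ff n i (j'+1) = ∑ k ∈ Finset.range (j'+1), D (i - (j'+1) + k + 1) (k+1) :=
        ih (j'+1) (by omega) hji' (by omega)
      have hD : D (i+1) (j'+1) = (xv n (j'+1) - xv n (i+1) - tv n) * ff n i (j'+1) := by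
        rw [hrec (i+1) (j'+1) (by omega) (by omega) hin, h2, mul_comm]
        congr 1
        apply Finset.sum_congr rfl
        intro l hl
        simp only [Finset.mem_range] at hl
        congr 1
        omega
      rw [Finset.sum_range_succ, show i + 1 - (j'+1) + j' + 1 = i + 1 by omega, ← hD]
      congr 1
      rcases Nat.eq_zero_or_pos j' with h0 | hpos
      · subst h0; simp [ff]
      · rw [ih j' hpos (by omega) (by omega)]
        apply Finset.sum_congr rfl
        intro k hk
        simp only [Finset.mem_range] at hk
        congr 1
        omega
end

section
/- For every pair (i,j) with n ≥ i ≥ j ≥ 1, the polynomial obtained from f_{i,j} by substituting t = 0 equals Σ_{k=1}^{j} x_k · ∏_{ℓ=j+1}^{i} (x_k − x_ℓ) in ℚ[x_1,…,x_n], where for i = j the empty product ∏_{ℓ=j+1}^{i} (x_k − x_ℓ) is taken to be 1. -/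
open MvPolynomial Finset

/-- The variable `x_k` (for `1 ≤ k ≤ n`) in `ℚ[x_1,…,x_n]`. -/
noncomputable def xq (n : ℕ) (k : ℕ) : MvPolynomial (Fin n) ℚ :=
  if h : k - 1 < n then X (⟨k - 1, h⟩ : Fin n) else 0

/-- The specialization `ℚ[x_1,…,x_n,t] → ℚ[x_1,…,x_n]` at `t = 0`, `x_i ↦ x_i`. -/
noncomputable def specialize (n : ℕ) :
    MvPolynomial (Option (Fin n)) ℚ →ₐ[ℚ] MvPolynomial (Fin n) ℚ :=
  MvPolynomial.aeval (fun v => Option.elim v 0 (fun i => X i))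

lemma spec_tv (n : ℕ) : specialize n (tv n) = 0 := by
  simp [specialize, tv]

lemma spec_xv (n k : ℕ) : specialize n (xv n k) = xq n k := by
  unfold xv xq
  split
  · simp [specialize]
  · exact map_zero _

lemma spec_pp (n i : ℕ) :
    specialize n (pp n i) = ∑ k ∈ Finset.Icc 1 i, xq n k := by
  rw [pp, map_sum, ← Finset.Ico_add_one_right_eq_Icc, Finset.sum_Ico_eq_sum_range]
  simp only [show i + 1 - 1 = i from rfl]
  refine Finset.sum_congr rfl fun k _ => ?_
  rw [map_sub, map_mul, spec_tv, spec_xv, mul_zero, sub_zero, Nat.add_comm 1 k]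

lemma key_identity {R : Type*} [CommRing R] (x : ℕ → R) (j i : ℕ) (h : j < i) :
    (∑ k ∈ Finset.Icc 1 j, x k * ∏ l ∈ Finset.Icc (j + 1) i, (x k - x l)) +
      (x (j + 1) - x (i + 1)) *
        ∑ k ∈ Finset.Icc 1 (j + 1), x k * ∏ l ∈ Finset.Icc (j + 2) i, (x k - x l) =
    ∑ k ∈ Finset.Icc 1 (j + 1), x k * ∏ l ∈ Finset.Icc (j + 2) (i + 1), (x k - x l) := by
  have hsplit1 : ∀ k, ∏ l ∈ Finset.Icc (j + 1) i, (x k - x l)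
      = (x k - x (j + 1)) * ∏ l ∈ Finset.Icc (j + 2) i, (x k - x l) := by
    intro k
    rw [← Finset.Ico_add_one_right_eq_Icc, ← Finset.Ico_add_one_right_eq_Icc,
      Finset.prod_eq_prod_Ico_succ_bot (by omega)]
  have hsplit2 : ∀ k, ∏ l ∈ Finset.Icc (j + 2) (i + 1), (x k - x l)
      = (∏ l ∈ Finset.Icc (j + 2) i, (x k - x l)) * (x k - x (i + 1)) :=
    fun k => Finset.prod_Icc_succ_top (by omega) _
  simp only [hsplit1, hsplit2]
  rw [Finset.sum_Icc_succ_top (by omega : 1 ≤ j + 1),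
    Finset.sum_Icc_succ_top (by omega : 1 ≤ j + 1), mul_add, Finset.mul_sum,
    ← add_assoc, ← Finset.sum_add_distrib]
  congr 1
  · exact Finset.sum_congr rfl fun k _ => by ring
  · ring

lemma main_aux (n : ℕ) : ∀ i j : ℕ, j ≤ i → i ≤ n →
    specialize n (ff n i j) =
      ∑ k ∈ Finset.Icc 1 j, xq n k * ∏ l ∈ Finset.Icc (j + 1) i, (xq n k - xq n l) := by
  intro i
  induction i with
  | zero =>
    intro j hj _
    interval_cases j
    simp [ff]
  | succ i ih =>
    intro j hj hn
    match j with
    | 0 => simp [ff]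
    | j + 1 =>
      rw [ff]
      by_cases hij : i = j
      · subst hij
        rw [if_pos rfl, spec_pp]
        refine Finset.sum_congr rfl fun k _ => ?_
        rw [Finset.Icc_eq_empty (by omega), Finset.prod_empty, mul_one]
      · rw [if_neg hij, map_add, map_mul, map_sub, map_sub, spec_xv, spec_xv, spec_tv,
          sub_zero, ih j (by omega) (by omega), ih (j + 1) (by omega) (by omega)]
        exact key_identity (xq n) j i (by omega)

/-- For `n ≥ i ≥ j ≥ 1`, the specialization of `f_{i,j}` at `t = 0` equals
`∑_{k=1}^{j} x_k ∏_{ℓ=j+1}^{i} (x_k - x_ℓ)` (with the empty product equal to `1`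
when `i = j`). -/
theorem stmt3 (n : ℕ) (i j : ℕ) (h1 : 1 ≤ j) (h2 : j ≤ i) (h3 : i ≤ n) :
    specialize n (ff n i j) =
      ∑ k ∈ Finset.Icc 1 j, xq n k * ∏ l ∈ Finset.Icc (j + 1) i, (xq n k - xq n l) :=
  main_aux n i j h2 h3
end

section
/- For every integer i with 1 ≤ i ≤ n, one has the factorization f_{i,1} = (x_1 − t) · ∏_{ℓ=2}^{i} (x_1 − x_ℓ − t) in ℚ[x_1,…,x_n,t], where for i = 1 the empty product is taken to be 1. -/
open MvPolynomial Finset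

/-- For `1 ≤ i ≤ n`, `f_{i,1} = (x_1 - t) ∏_{ℓ=2}^{i} (x_1 - x_ℓ - t)` (with the empty
product equal to `1` when `i = 1`). -/
theorem stmt4 (n : ℕ) (i : ℕ) (h1 : 1 ≤ i) (h2 : i ≤ n) :
    ff n i 1 = (xv n 1 - tv n) * ∏ l ∈ Finset.Icc 2 i, (xv n 1 - xv n l - tv n) := by
  induction i with
  | zero => omega
  | succ i ih =>
    rcases Nat.eq_or_lt_of_le h1 with h | h
    · obtain rfl : i = 0 := by omega
      simp [ff, pp]
    · have hi1 : 1 ≤ i := by omega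
      rw [show i + 1 = (i - 1 + 1) + 1 by omega, ff]
      rw [if_neg (by omega)]
      rw [show i - 1 + 1 = i by omega]
      have : ff n i 0 = 0 := by cases i <;> rfl
      rw [this, zero_add, ih hi1 (by omega)]
      rw [show Finset.Icc 2 (i+1) = insert (i+1) (Finset.Icc 2 i) from
        (Finset.insert_Icc_right_eq_Icc_add_one (by omega)).symm]
      rw [Finset.prod_insert (by simp)]
      ring
end

section
/- For every integer j with 1 ≤ j ≤ n−1, one has the identity f_{j+1,j} = f_{j,j−1} + (−p_{j−1} + 2p_j − p_{j+1} − 2t)·p_j in ℚ[x_1,…,x_n,t]. -/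
open MvPolynomial Finset

/-- For `1 ≤ j ≤ n - 1`,
`f_{j+1,j} = f_{j,j-1} + (-p_{j-1} + 2 p_j - p_{j+1} - 2t) p_j`. -/
theorem stmt5 (n : ℕ) (hn : 2 ≤ n) (j : ℕ) (h1 : 1 ≤ j) (h2 : j ≤ n - 1) :
    ff n (j + 1) j =
      ff n j (j - 1) +
        (-(pp n (j - 1)) + 2 * pp n j - pp n (j + 1) - 2 * tv n) * pp n j := by
  obtain ⟨k, rfl⟩ : ∃ k, j = k + 1 := ⟨j - 1, (Nat.succ_pred_eq_of_pos h1).symm⟩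
  have e1 : ff n (k + 1 + 1) (k + 1) =
      ff n (k + 1) k + (xv n (k + 1) - xv n (k + 1 + 1) - tv n) * ff n (k + 1) (k + 1) := by
    rw [ff]; simp
  have e2 : ff n (k + 1) (k + 1) = pp n (k + 1) := by rw [ff]; simp
  rw [e1, e2]
  simp only [Nat.add_sub_cancel, pp, Finset.sum_range_succ]
  push_cast
  simp only [map_add, map_one]
  ring
end

section
/- Let h be the Hessenberg function h = (2,3,…,n,n), i.e. h(i) = i+1 for 1 ≤ i ≤ n−1 and h(n) = n (the Peterson case). Then the ideal I(h) of ℚ[x_1,…,x_n,t] generated by f_{h(j),j} for j = 1,…,n (that is, by f_{2,1}, f_{3,2}, …, f_{n,n−1}, f_{n,n}) is equal to the ideal generated by the n polynomials (−p_{j−1} + 2p_j − p_{j+1} − 2t)·p_j for 1 ≤ j ≤ n−1 together with p_n. -/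
open MvPolynomial Finset

noncomputable def gg (n : ℕ) (j : ℕ) : MvPolynomial (Option (Fin n)) ℚ :=
  (-(pp n (j - 1)) + 2 * pp n j - pp n (j + 1) - 2 * tv n) * pp n j

lemma key3 (n m : ℕ) :
    xv n (m + 1) - xv n (m + 2) - tv n
      = -(pp n m) + 2 * pp n (m + 1) - pp n (m + 2) - 2 * tv n := by
  simp only [pp, Finset.sum_range_succ, Nat.cast_add, Nat.cast_one, map_add, map_one]
  ring

lemma ff_diag (n m : ℕ) : ff n (m + 1) (m + 1) = pp n (m + 1) := by
  simp [ff]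

lemma ff_step (n m : ℕ) :
    ff n (m + 2) (m + 1) = ff n (m + 1) m + gg n (m + 1) := by
  have : ff n (m + 2) (m + 1)
      = ff n (m + 1) m + (xv n (m + 1) - xv n (m + 2) - tv n) * ff n (m + 1) (m + 1) := by
    rw [ff]; simp [Nat.succ_ne_self]
  rw [this, ff_diag, key3, gg]
  norm_num

lemma ff_sum (n : ℕ) : ∀ j : ℕ, ff n (j + 1) j = ∑ k ∈ Finset.range j, gg n (k + 1)
  | 0 => by simp [ff]
  | m + 1 => by rw [ff_step, ff_sum n m, Finset.sum_range_succ]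

lemma ff_zero (n i : ℕ) : ff n i 0 = 0 := by cases i <;> simp [ff]

/-- For the Peterson Hessenberg function `h = (2,3,…,n,n)`, the ideal `I(h)` generated by
`f_{h(j),j}` for `1 ≤ j ≤ n` equals the ideal generated by the polynomials
`(-p_{j-1} + 2 p_j - p_{j+1} - 2t) p_j` for `1 ≤ j ≤ n-1` together with `p_n`. -/
theorem stmt6 (n : ℕ) (hn : 2 ≤ n) (h : ℕ → ℕ)
    (hP : ∀ j : ℕ, 1 ≤ j → j ≤ n - 1 → h j = j + 1) (hPn : h n = n) :
    Ideal.span ((fun j => ff n (h j) j) '' Set.Icc 1 n) =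
      Ideal.span
        (((fun j => (-(pp n (j - 1)) + 2 * pp n j - pp n (j + 1) - 2 * tv n) * pp n j) ''
            Set.Icc 1 (n - 1)) ∪ {pp n n}) := by
  obtain ⟨m', rfl⟩ : ∃ m', n = m' + 1 := ⟨n - 1, by omega⟩
  set n := m' + 1 with hn'
  have hnn : ff n n n = pp n n := ff_diag n m'
  -- helper: each partial sum generator lies in LHS span
  have hmemL : ∀ k : ℕ, k ≤ n - 1 →
      ff n (k + 1) k ∈ Ideal.span ((fun j => ff n (h j) j) '' Set.Icc 1 n) := by
    intro k hk
    match k with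
    | 0 => rw [ff_zero]; exact Ideal.zero_mem _
    | m + 1 =>
      exact Ideal.subset_span ⟨m + 1, ⟨by omega, by omega⟩, by show ff n (h (m+1)) (m+1) = _; rw [hP (m+1) (by omega) hk]⟩
  apply le_antisymm <;> rw [Ideal.span_le]
  · rintro _ ⟨j, ⟨hj1, hj2⟩, rfl⟩
    by_cases hjle : j ≤ n - 1
    · simp only
      rw [hP j hj1 hjle, ff_sum]
      apply Ideal.sum_mem
      intro k hk
      simp only [Finset.mem_range] at hk
      exact Ideal.subset_span (Or.inl ⟨k + 1, ⟨by omega, by omega⟩, rfl⟩)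
    · have : j = n := by omega
      subst this
      simp only
      rw [hPn, hnn]
      exact Ideal.subset_span (Or.inr rfl)
  · rintro _ (⟨j, ⟨hj1, hj2⟩, rfl⟩ | rfl)
    · obtain ⟨m, rfl⟩ : ∃ m, j = m + 1 := ⟨j - 1, by omega⟩
      have heq : (fun j => (-(pp n (j - 1)) + 2 * pp n j - pp n (j + 1) - 2 * tv n) * pp n j)
          (m + 1) = ff n (m + 2) (m + 1) - ff n (m + 1) m := by
        rw [ff_step]; simp [gg]
      rw [heq]
      exact sub_mem (hmemL (m + 1) hj2) (hmemL m (by omega))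
    · exact Ideal.subset_span ⟨n, ⟨by omega, le_refl n⟩, by simp only; rw [hPn, hnn]⟩
end

section
/- For every integer r with 1 ≤ r ≤ n, one has the identity q_r(x) = Σ_{i=0}^{r−1} (−1)^i · e_i(x_{n+2−r},…,x_n) · 𝗉_{r−i}(x_1,…,x_n) in ℚ[x_1,…,x_n], where q_r(x) := Σ_{k=1}^{n+1−r} x_k · ∏_{ℓ=n+2−r}^{n} (x_k − x_ℓ) (empty product equal to 1 when r = 1), e_i denotes the degree-i elementary symmetric polynomial in the r−1 variables x_{n+2−r},…,x_n (with e_0 = 1), and 𝗉_m(x_1,…,x_n) := Σ_{k=1}^{n} x_k^m denotes the m-th power sum. -/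
open MvPolynomial Finset

/-- `q_r = ∑_{k=1}^{n+1-r} x_k ∏_{ℓ=n+2-r}^{n} (x_k - x_ℓ)` (empty product is `1` when
`r = 1`). -/
noncomputable def qpoly (n : ℕ) (r : ℕ) : MvPolynomial (Fin n) ℚ :=
  ∑ k ∈ Finset.Icc 1 (n + 1 - r),
    xq n k * ∏ l ∈ Finset.Icc (n + 2 - r) n, (xq n k - xq n l)

/-- The degree-`i` elementary symmetric polynomial in the variables `x_{n+2-r}, …, x_n`
(so `e_0 = 1`). -/
noncomputable def esymmTail (n : ℕ) (r : ℕ) (i : ℕ) : MvPolynomial (Fin n) ℚ :=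
  ∑ A ∈ Finset.powersetCard i (Finset.Icc (n + 2 - r) n), ∏ l ∈ A, xq n l

/-- The `m`-th power sum `𝗉_m = ∑_{k=1}^{n} x_k^m`. -/
noncomputable def powsum (n : ℕ) (m : ℕ) : MvPolynomial (Fin n) ℚ :=
  ∑ k ∈ Finset.Icc 1 n, xq n k ^ m

lemma prod_expand (n r : ℕ) (h1 : 1 ≤ r) (h2 : r ≤ n) (p : MvPolynomial (Fin n) ℚ) :
    ∏ l ∈ Finset.Icc (n + 2 - r) n, (p - xq n l)
      = ∑ i ∈ Finset.range r, (-1) ^ i * esymmTail n r i * p ^ (r - 1 - i) := by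
  classical
  have hcard : (Finset.Icc (n + 2 - r) n).card = r - 1 := by
    rw [Nat.card_Icc]; omega
  have h : ∀ l ∈ Finset.Icc (n + 2 - r) n, p - xq n l = (-xq n l) + p := fun l _ => by ring
  rw [Finset.prod_congr rfl h, Finset.prod_add]
  rw [powerset_card_disjiUnion]; erw [Finset.sum_disjiUnion]; rw [hcard]
  have hr : r - 1 + 1 = r := by omega
  rw [hr]
  refine Finset.sum_congr rfl fun i hi => ?_
  rw [esymmTail]
  simp only [Finset.sum_mul, Finset.mul_sum]
  refine Finset.sum_congr rfl fun A hA => ?_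
  rw [Finset.mem_powersetCard] at hA
  have hsd : (Finset.Icc (n + 2 - r) n \ A).card = r - 1 - i := by
    rw [Finset.card_sdiff_of_subset hA.1, hcard, hA.2]
  have hneg : ∏ l ∈ A, -xq n l = (-1) ^ i * ∏ l ∈ A, xq n l := by
    have : ∀ l ∈ A, -xq n l = (-1) * xq n l := fun l _ => by ring
    rw [Finset.prod_congr rfl this, Finset.prod_mul_distrib, Finset.prod_const, hA.2]
  rw [hneg, Finset.prod_const, hsd]


/-- For `1 ≤ r ≤ n`,
`q_r = ∑_{i=0}^{r-1} (-1)^i e_i(x_{n+2-r},…,x_n) 𝗉_{r-i}(x_1,…,x_n)`. -/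
theorem stmt8 (n : ℕ) (r : ℕ) (h1 : 1 ≤ r) (h2 : r ≤ n) :
    qpoly n r = ∑ i ∈ Finset.range r, (-1) ^ i * esymmTail n r i * powsum n (r - i) := by
  classical
  have hS : Finset.Icc (n + 2 - r) n = Finset.Ioc (n + 1 - r) n := by
    rw [← Finset.Icc_add_one_left_eq_Ioc]; congr 1; omega
  have hsplit : Finset.Icc 1 (n + 1 - r) ∪ Finset.Ioc (n + 1 - r) n = Finset.Icc 1 n := by
    rw [show (1:ℕ) = 0 + 1 from rfl, Finset.Icc_add_one_left_eq_Ioc, Finset.Icc_add_one_left_eq_Ioc]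
    exact Finset.Ioc_union_Ioc_eq_Ioc (by omega) (by omega)
  have key : qpoly n r
      = ∑ k ∈ Finset.Icc 1 n, xq n k * ∏ l ∈ Finset.Icc (n + 2 - r) n, (xq n k - xq n l) := by
    rw [← hsplit, Finset.sum_union (by
      simp [Finset.disjoint_left, Finset.mem_Icc, Finset.mem_Ioc]; omega)]
    have hz : ∑ k ∈ Finset.Ioc (n + 1 - r) n,
        xq n k * ∏ l ∈ Finset.Icc (n + 2 - r) n, (xq n k - xq n l) = 0 := by
      refine Finset.sum_eq_zero fun k hk => ?_
      apply mul_eq_zero_of_right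
      exact Finset.prod_eq_zero (hS ▸ hk) (sub_self _)
    rw [hz, add_zero, qpoly]
  rw [key]
  have hexp : ∀ k, xq n k * ∏ l ∈ Finset.Icc (n + 2 - r) n, (xq n k - xq n l)
      = ∑ i ∈ Finset.range r, (-1) ^ i * esymmTail n r i * xq n k ^ (r - i) := by
    intro k
    rw [prod_expand n r h1 h2, Finset.mul_sum]
    refine Finset.sum_congr rfl fun i hi => ?_
    rw [Finset.mem_range] at hi
    have : r - i = (r - 1 - i) + 1 := by omega
    rw [this, pow_succ]
    ring
  rw [Finset.sum_congr rfl fun k _ => hexp k, Finset.sum_comm]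
  refine Finset.sum_congr rfl fun i _ => ?_
  rw [powsum, Finset.mul_sum]
end

section
/- In ℚ[x_1,…,x_n], the following three ideals coincide: (1) the ideal generated by q_1,…,q_n, where q_r := Σ_{k=1}^{n+1−r} x_k · ∏_{ℓ=n+2−r}^{n} (x_k − x_ℓ); (2) the ideal generated by the power sums 𝗉_1,…,𝗉_n, where 𝗉_m := Σ_{k=1}^{n} x_k^m; and (3) the ideal generated by the elementary symmetric polynomials e_1(x_1,…,x_n),…,e_n(x_1,…,x_n). -/
open MvPolynomial Finset

lemma powsum_eq_psum (n m : ℕ) : powsum n m = psum (Fin n) ℚ m := by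
  unfold powsum psum
  rw [show Finset.Icc 1 n = Finset.image (· + 1) (Finset.range n) by
    ext k
    simp only [Finset.mem_Icc, Finset.mem_image, Finset.mem_range]
    constructor
    · rintro ⟨h1, h2⟩; exact ⟨k - 1, by omega, by omega⟩
    · rintro ⟨a, ha, rfl⟩; omega]
  rw [Finset.sum_image (by intro a _ b _ h; have h' : a + 1 = b + 1 := h; omega)]
  rw [show (∑ x ∈ Finset.range n, xq n (x + 1) ^ m)
      = ∑ x ∈ Finset.range n, (fun j => (if h : j < n then X (⟨j, h⟩ : Fin n) else 0) ^ m) x from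
    Finset.sum_congr rfl fun x _ => by simp [xq]]
  rw [← Fin.sum_univ_eq_sum_range (fun j => (if h : j < n then X (⟨j, h⟩ : Fin n) else 0) ^ m) n]
  exact Finset.sum_congr rfl fun i _ => by simp [i.isLt]

lemma qpoly_expand (n r : ℕ) (hr1 : 1 ≤ r) (hrn : r ≤ n) :
    qpoly n r = ∑ t ∈ (Finset.Icc (n + 2 - r) n).powerset,
      powsum n (t.card + 1) * ∏ l ∈ Finset.Icc (n + 2 - r) n \ t, (-xq n l) := by
  unfold qpoly
  rw [Finset.sum_subset (Finset.Icc_subset_Icc_right (by omega : n + 1 - r ≤ n))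
      (fun k hk hk' => ?_)]
  · have hexp : ∀ k, xq n k * ∏ l ∈ Finset.Icc (n + 2 - r) n, (xq n k - xq n l)
        = ∑ t ∈ (Finset.Icc (n + 2 - r) n).powerset,
            xq n k ^ (t.card + 1) * ∏ l ∈ Finset.Icc (n + 2 - r) n \ t, (-xq n l) := by
      intro k
      have : ∀ l, xq n k - xq n l = xq n k + (-xq n l) := fun l => by ring
      simp_rw [this]
      rw [Finset.prod_add, Finset.mul_sum]
      exact Finset.sum_congr rfl fun t _ => by
        rw [Finset.prod_const, ← mul_assoc, ← pow_succ']
    simp_rw [hexp]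
    rw [Finset.sum_comm]
    exact Finset.sum_congr rfl fun t _ => by
      rw [← Finset.sum_mul]; rfl
  · have hk1 : 1 ≤ k := (Finset.mem_Icc.mp hk).1
    have hk2 : k ≤ n := (Finset.mem_Icc.mp hk).2
    have : k ∈ Finset.Icc (n + 2 - r) n := by
      rw [Finset.mem_Icc]
      rw [Finset.mem_Icc] at hk'
      omega
    rw [Finset.prod_eq_zero this (by rw [sub_self]), mul_zero]

lemma powsum_mem_qspan (n : ℕ) : ∀ m, 1 ≤ m → m ≤ n →
    powsum n m ∈ Ideal.span ((fun r => qpoly n r) '' Set.Icc 1 n) := by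
  intro m
  induction m using Nat.strong_induction_on with
  | _ m ih =>
    intro h1 h2
    have hS : (Finset.Icc (n + 2 - m) n).card = m - 1 := by rw [Nat.card_Icc]; omega
    have hmem : Finset.Icc (n + 2 - m) n ∈ (Finset.Icc (n + 2 - m) n).powerset :=
      Finset.mem_powerset_self _
    have hexp := qpoly_expand n m h1 h2
    rw [← Finset.add_sum_erase _ _ hmem, Finset.sdiff_self, Finset.prod_empty, mul_one, hS,
      show m - 1 + 1 = m by omega] at hexp
    have hps : powsum n m = qpoly n m -
        ∑ t ∈ ((Finset.Icc (n + 2 - m) n).powerset.erase (Finset.Icc (n + 2 - m) n)),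
          powsum n (t.card + 1) * ∏ l ∈ Finset.Icc (n + 2 - m) n \ t, (-xq n l) :=
      eq_sub_of_add_eq hexp.symm
    rw [hps]
    apply Ideal.sub_mem
    · exact Ideal.subset_span ⟨m, Set.mem_Icc.mpr ⟨h1, h2⟩, rfl⟩
    · apply Ideal.sum_mem
      intro t ht
      apply Ideal.mul_mem_right
      have htS := Finset.mem_erase.mp ht
      have hsub := Finset.mem_powerset.mp htS.2
      have hlt : t.card < m - 1 := by
        have := Finset.card_lt_card (hsub.ssubset_of_ne htS.1)
        omega
      exact ih (t.card + 1) (by omega) (by omega) (by omega)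

/-- In `ℚ[x_1,…,x_n]`, the ideal generated by `q_1, …, q_n` equals the ideal generated by
the power sums `𝗉_1, …, 𝗉_n`, and both equal the ideal generated by the elementary
symmetric polynomials `e_1(x_1,…,x_n), …, e_n(x_1,…,x_n)`. -/
theorem stmt9 (n : ℕ) (hn : 1 ≤ n) :
    Ideal.span ((fun r => qpoly n r) '' Set.Icc 1 n) =
        Ideal.span ((fun m => powsum n m) '' Set.Icc 1 n) ∧
      Ideal.span ((fun m => powsum n m) '' Set.Icc 1 n) =
        Ideal.span ((fun i => MvPolynomial.esymm (Fin n) ℚ i) '' Set.Icc 1 n) := by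
  constructor
  · apply le_antisymm
    · rw [Ideal.span_le]
      rintro _ ⟨r, hr, rfl⟩
      obtain ⟨hr1, hr2⟩ := Set.mem_Icc.mp hr
      show qpoly n r ∈ _
      rw [qpoly_expand n r hr1 hr2]
      apply Ideal.sum_mem
      intro t ht
      apply Ideal.mul_mem_right
      have hcard := Finset.card_le_card (Finset.mem_powerset.mp ht)
      rw [Nat.card_Icc] at hcard
      exact Ideal.subset_span ⟨t.card + 1, Set.mem_Icc.mpr ⟨by omega, by omega⟩, rfl⟩
    · rw [Ideal.span_le]
      rintro _ ⟨m, hm, rfl⟩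
      obtain ⟨h1, h2⟩ := Set.mem_Icc.mp hm
      exact powsum_mem_qspan n m h1 h2
  · apply le_antisymm
    · rw [Ideal.span_le]
      rintro _ ⟨m, hm, rfl⟩
      obtain ⟨h1, h2⟩ := Set.mem_Icc.mp hm
      show powsum n m ∈ _
      rw [powsum_eq_psum, psum_eq_mul_esymm_sub_sum (Fin n) ℚ m (by omega)]
      apply Ideal.sub_mem
      · exact Ideal.mul_mem_left _ _
          (Ideal.subset_span ⟨m, Set.mem_Icc.mpr ⟨h1, h2⟩, rfl⟩)
      · apply Ideal.sum_mem
        intro a ha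
        have hmem := Finset.mem_filter.mp ha
        have hsum := Finset.HasAntidiagonal.mem_antidiagonal.mp hmem.1
        have hIoo := hmem.2
        simp only [Set.mem_Ioo] at hIoo
        exact Ideal.mul_mem_right _ _ (Ideal.mul_mem_left _ _
          (Ideal.subset_span ⟨a.1, Set.mem_Icc.mpr ⟨by omega, by omega⟩, rfl⟩))
    · rw [Ideal.span_le]
      rintro _ ⟨k, hk, rfl⟩
      obtain ⟨h1, h2⟩ := Set.mem_Icc.mp hk
      show esymm (Fin n) ℚ k ∈ _
      have hk0 : (k : ℚ) ≠ 0 := by positivity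
      have hC : esymm (Fin n) ℚ k
          = C ((k : ℚ)⁻¹) * ((k : MvPolynomial (Fin n) ℚ) * esymm (Fin n) ℚ k) := by
        rw [← mul_assoc, show ((k : MvPolynomial (Fin n) ℚ)) = C ((k : ℚ)) by
          simp, ← C_mul, inv_mul_cancel₀ hk0, C_1, one_mul]
      rw [hC, mul_esymm_eq_sum (Fin n) ℚ k]
      apply Ideal.mul_mem_left
      apply Ideal.mul_mem_left
      apply Ideal.sum_mem
      intro a ha
      have hmem := Finset.mem_filter.mp ha
      have hsum := Finset.HasAntidiagonal.mem_antidiagonal.mp hmem.1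
      have hlt := hmem.2
      apply Ideal.mul_mem_left
      rw [← powsum_eq_psum]
      exact Ideal.subset_span ⟨a.2, Set.mem_Icc.mpr ⟨by omega, by omega⟩, rfl⟩
end

section
/- Let n ≥ 2. In the polynomial ring ℤ[x_1,…,x_n], the ideal generated by the power sums 𝗉_1,…,𝗉_n, where 𝗉_m := Σ_{k=1}^{n} x_k^m, is NOT equal to the ideal generated by the elementary symmetric polynomials e_1(x_1,…,x_n),…,e_n(x_1,…,x_n). -/
open MvPolynomial Finset

/-- The variable `x_k` (for `1 ≤ k ≤ n`) in `ℤ[x_1,…,x_n]`. -/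
noncomputable def xz (n : ℕ) (k : ℕ) : MvPolynomial (Fin n) ℤ :=
  if h : k - 1 < n then X (⟨k - 1, h⟩ : Fin n) else 0

/-- The `m`-th power sum `𝗉_m = ∑_{k=1}^{n} x_k^m` in `ℤ[x_1,…,x_n]`. -/
noncomputable def powsumZ (n : ℕ) (m : ℕ) : MvPolynomial (Fin n) ℤ :=
  ∑ k ∈ Finset.Icc 1 n, xz n k ^ m

/-- For `n ≥ 2`, in `ℤ[x_1,…,x_n]` the ideal generated by the power sums `𝗉_1, …, 𝗉_n`
is NOT equal to the ideal generated by the elementary symmetric polynomials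
`e_1, …, e_n`. -/
theorem stmt10 (n : ℕ) (hn : 2 ≤ n) :
    Ideal.span ((fun m => powsumZ n m) '' Set.Icc 1 n) ≠
      Ideal.span ((fun i => MvPolynomial.esymm (Fin n) ℤ i) '' Set.Icc 1 n) := by
  intro h
  -- evaluation sending x₁, x₂ ↦ 1 and other variables ↦ 0, into ℤ/2
  set v : Fin n → ZMod 2 := fun i => if (i : ℕ) < 2 then 1 else 0 with hv
  have he2 : esymm (Fin n) ℤ 2 ∈
      Ideal.span ((fun i => MvPolynomial.esymm (Fin n) ℤ i) '' Set.Icc 1 n) :=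
    Ideal.subset_span ⟨2, ⟨one_le_two, hn⟩, rfl⟩
  rw [← h] at he2
  -- all power sums are in the kernel of evaluation
  have hker : Ideal.span ((fun m => powsumZ n m) '' Set.Icc 1 n) ≤
      RingHom.ker (aeval v : MvPolynomial (Fin n) ℤ →ₐ[ℤ] ZMod 2) := by
    rw [Ideal.span_le]
    rintro _ ⟨m, ⟨hm1, hm2⟩, rfl⟩
    simp only [SetLike.mem_coe, RingHom.mem_ker, AlgHom.toRingHom_eq_coe,
      RingHom.coe_coe]
    rw [powsumZ, map_sum]
    have hterm : ∀ k ∈ Finset.Icc 1 n,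
        aeval v (xz n k ^ m) = if k ≤ 2 then (1 : ZMod 2) else 0 := by
      intro k hk
      obtain ⟨hk1, hk2⟩ := Finset.mem_Icc.mp hk
      have h1 : k - 1 < n := by omega
      rw [map_pow, xz, dif_pos h1, aeval_X, hv]
      by_cases h2 : k ≤ 2
      · have : (⟨k - 1, h1⟩ : Fin n).val < 2 := by simpa using (by omega : k - 1 < 2)
        simp [this, h2]
      · have : ¬ (⟨k - 1, h1⟩ : Fin n).val < 2 := by simpa using (by omega : ¬ k - 1 < 2)
        simp [this, h2, zero_pow (by omega : m ≠ 0)]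
    rw [Finset.sum_congr rfl hterm, ← Finset.sum_filter]
    have hfil : (Finset.Icc 1 n).filter (fun k => k ≤ 2) = {1, 2} := by
      ext k
      simp only [Finset.mem_filter, Finset.mem_Icc, Finset.mem_insert, Finset.mem_singleton]
      omega
    rw [hfil]
    decide
  have h0 : aeval v (esymm (Fin n) ℤ 2) = 0 := hker he2
  -- but e₂ evaluates to 1
  have h1 : aeval v (esymm (Fin n) ℤ 2) = 1 := by
    rw [esymm, map_sum]
    have ha : (0 : ℕ) < n := by omega
    have hb : (1 : ℕ) < n := by omega
    set a : Fin n := ⟨0, ha⟩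
    set b : Fin n := ⟨1, hb⟩
    have hab : a ≠ b := by simp [a, b, Fin.ext_iff]
    set s₀ : Finset (Fin n) := {a, b} with hs₀
    have hs₀mem : s₀ ∈ Finset.powersetCard 2 Finset.univ := by
      rw [Finset.mem_powersetCard]
      exact ⟨Finset.subset_univ _, by rw [hs₀, Finset.card_insert_of_notMem (by simpa using hab), Finset.card_singleton]⟩
    rw [Finset.sum_eq_single s₀]
    · rw [map_prod, hs₀, Finset.prod_insert (by simpa using hab), Finset.prod_singleton]
      simp [aeval_X, hv, a, b]
    · intro t ht htne
      rw [Finset.mem_powersetCard] at ht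
      by_cases hsub : ∀ i ∈ t, (i : ℕ) < 2
      · exfalso
        apply htne
        have hsub' : t ⊆ s₀ := by
          intro i hi
          have := hsub i hi
          rw [hs₀]
          simp only [Finset.mem_insert, Finset.mem_singleton]
          rcases (by omega : (i : ℕ) = 0 ∨ (i : ℕ) = 1) with h | h
          · left; exact Fin.ext h
          · right; exact Fin.ext h
        have hcard : s₀.card ≤ t.card := by
          rw [ht.2, hs₀, Finset.card_insert_of_notMem (by simpa using hab), Finset.card_singleton]
        exact Finset.eq_of_subset_of_card_le hsub' hcard
      · push_neg at hsub
        obtain ⟨i, hi, hi2⟩ := hsub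
        rw [map_prod]
        refine Finset.prod_eq_zero hi ?_
        rw [aeval_X]
        simp only [hv]
        exact if_neg (by omega)
    · intro hns
      exact absurd hs₀mem hns
  rw [h0] at h1
  exact one_ne_zero h1.symm
end

section
/- Let h : {1,…,n} → {1,…,n} be a Hessenberg function and let w be a permutation of {1,…,n} such that for every k with w(k) ≥ 2 one has w⁻¹(w(k) − 1) ≤ h(k). Then for every j with 1 ≤ j ≤ n, the polynomial in ℚ[t] obtained from f_{h(j),j} by substituting x_i ↦ w(i)·t for each i = 1,…,n is identically zero. -/
open MvPolynomial Finset

namespace Stmt11Aux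

lemma Icc_right (a b : ℕ) (h : a ≤ b + 1) :
    Icc a (b+1) = insert (b+1) (Icc a b) := by
  ext x; simp only [mem_Icc, mem_insert]; omega

lemma Icc_left (a b : ℕ) (h : a ≤ b) :
    Icc a b = insert a (Icc (a+1) b) := by
  ext x; simp only [mem_Icc, mem_insert]; omega

variable (a : ℕ → ℚ)

/-- The coefficient `c_k^{(j)} = (a_k-1) ∏_{l≤j, l≠k} (a_k-a_l-1)/(a_k-a_l)`. -/
noncomputable def cf (k j : ℕ) : ℚ :=
  (a k - 1) * ∏ l ∈ (Icc 1 j).erase k, ((a k - a l - 1) * (a k - a l)⁻¹)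

/-- The tail product `∏_{l=j+1}^{i} (a_k - a_l - 1)`. -/
noncomputable def tf (k j i : ℕ) : ℚ := ∏ l ∈ Icc (j+1) i, (a k - a l - 1)

/-- The scalars following the recursion of `ff` under `x_i ↦ a_i t`. -/
def Gq : ℕ → ℕ → ℚ
  | _, 0 => 0
  | 0, _ + 1 => 0
  | i + 1, j + 1 =>
      if i = j then ∑ k ∈ Finset.range (j + 1), (a (k+1) - (k+1))
      else Gq i j + (a (j+1) - a (i+1) - 1) * Gq i (j+1)

lemma Gq_zero (i : ℕ) : Gq a i 0 = 0 := by cases i <;> rfl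

lemma cf_succ (k j : ℕ) (hkj : k ≤ j) :
    cf a k (j+1) = cf a k j * ((a k - a (j+1) - 1) * (a k - a (j+1))⁻¹) := by
  have h1 : (Icc 1 (j+1)).erase k = insert (j+1) ((Icc 1 j).erase k) := by
    rw [Icc_right 1 j (by omega), Finset.erase_insert_of_ne (by omega)]
  have h2 : (j+1) ∉ (Icc 1 j).erase k := by
    simp only [mem_erase, mem_Icc]; omega
  rw [cf, h1, Finset.prod_insert h2, cf]; ring

lemma tf_diag (k j : ℕ) : tf a k j j = 1 := by
  rw [tf, Finset.Icc_eq_empty (by omega), Finset.prod_empty]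

lemma tf_left (k j i : ℕ) (h : j + 1 ≤ i) :
    tf a k j i = (a k - a (j+1) - 1) * tf a k (j+1) i := by
  rw [tf, Icc_left (j+1) i h, Finset.prod_insert (by simp), tf]

lemma tf_right (k j i : ℕ) (h : j + 1 ≤ i + 1) :
    tf a k j (i+1) = tf a k j i * (a k - a (i+1) - 1) := by
  rw [tf, Icc_right (j+1) i h, Finset.prod_insert (by simp), tf, mul_comm]

/-- The key Lagrange-interpolation identity. -/
lemma lemF (n j : ℕ) (hj : j + 1 ≤ n)
    (ha : ∀ k l, 1 ≤ k → k ≤ n → 1 ≤ l → l ≤ n → a k = a l → k = l) :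
    cf a (j+1) (j+1) = a (j+1) - ((j:ℚ)+1)
      + ∑ k ∈ Icc 1 j, cf a k j * (a k - a (j+1))⁻¹ := by
  set s : Finset ℕ := Icc 1 j with hs
  have hcard : #s = j := by rw [hs, Nat.card_Icc]; omega
  set b : ℚ := a (j+1) with hbdef
  have hmem : ∀ k ∈ s, 1 ≤ k ∧ k ≤ j := by intro k hk; rw [hs, mem_Icc] at hk; exact hk
  have hane : ∀ k ∈ s, a k ≠ b := by
    intro k hk hab
    have h1 := hmem k hk
    have := ha k (j+1) h1.1 (by omega) (by omega) (by omega) hab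
    omega
  have hinj : Set.InjOn a ↑s := by
    intro x hx y hy hxy
    simp only [Finset.coe_Icc, Set.mem_Icc, hs] at hx hy
    exact ha x y hx.1 (by omega) hy.1 (by omega) hxy
  set A : Polynomial ℚ := (Polynomial.X - Polynomial.C 1) * ∏ l ∈ s, (Polynomial.X - Polynomial.C (a l + 1)) with hA
  set B : Polynomial ℚ := (Polynomial.X - Polynomial.C ((j:ℚ)+1)) * ∏ l ∈ s, (Polynomial.X - Polynomial.C (a l)) with hB
  set Q : Polynomial ℚ := A - B with hQ
  have hmp1 : (∏ l ∈ s, (Polynomial.X - Polynomial.C (a l + 1))).Monic :=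
    Polynomial.monic_prod_of_monic _ _ fun i _ => Polynomial.monic_X_sub_C _
  have hmp2 : (∏ l ∈ s, (Polynomial.X - Polynomial.C (a l))).Monic :=
    Polynomial.monic_prod_of_monic _ _ fun i _ => Polynomial.monic_X_sub_C _
  have hAm : A.Monic := (Polynomial.monic_X_sub_C _).mul hmp1
  have hBm : B.Monic := (Polynomial.monic_X_sub_C _).mul hmp2
  have hpd1 : (∏ l ∈ s, (Polynomial.X - Polynomial.C (a l + 1))).natDegree = j := by
    rw [Polynomial.natDegree_prod_of_monic _ _ fun i _ => Polynomial.monic_X_sub_C _]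
    simp only [Polynomial.natDegree_X_sub_C]
    rw [Finset.sum_const, hcard, smul_eq_mul, mul_one]
  have hpd2 : (∏ l ∈ s, (Polynomial.X - Polynomial.C (a l))).natDegree = j := by
    rw [Polynomial.natDegree_prod_of_monic _ _ fun i _ => Polynomial.monic_X_sub_C _]
    simp only [Polynomial.natDegree_X_sub_C]
    rw [Finset.sum_const, hcard, smul_eq_mul, mul_one]
  have hAd : A.natDegree = j + 1 := by
    rw [hA, (Polynomial.monic_X_sub_C _).natDegree_mul hmp1, Polynomial.natDegree_X_sub_C, hpd1, add_comm]
  have hBd : B.natDegree = j + 1 := by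
    rw [hB, (Polynomial.monic_X_sub_C _).natDegree_mul hmp2, Polynomial.natDegree_X_sub_C, hpd2, add_comm]
  have hnextA : A.nextCoeff = -1 - (∑ l ∈ s, a l) - j := by
    rw [hA, (Polynomial.monic_X_sub_C _).nextCoeff_mul hmp1, Polynomial.nextCoeff_X_sub_C,
      Polynomial.prod_X_sub_C_nextCoeff]
    rw [Finset.sum_add_distrib, Finset.sum_const, hcard]
    push_cast; ring
  have hnextB : B.nextCoeff = -1 - (∑ l ∈ s, a l) - j := by
    rw [hB, (Polynomial.monic_X_sub_C _).nextCoeff_mul hmp2, Polynomial.nextCoeff_X_sub_C,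
      Polynomial.prod_X_sub_C_nextCoeff]
    ring
  have hcoeffA : A.coeff j = A.nextCoeff := by
    rw [Polynomial.nextCoeff, hAd]; simp
  have hcoeffB : B.coeff j = B.nextCoeff := by
    rw [Polynomial.nextCoeff, hBd]; simp
  have hdeg : Q.degree < (#s : ℕ) := by
    rw [hcard]
    rw [Polynomial.degree_lt_iff_coeff_zero]
    intro m hm
    rw [hQ, Polynomial.coeff_sub]
    rcases eq_or_lt_of_le hm with h | h
    · rw [← h, hcoeffA, hcoeffB, hnextA, hnextB, sub_self]
    · rcases eq_or_lt_of_le (Nat.succ_le_of_lt h) with h2 | h2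
      · rw [← h2]
        rw [show A.coeff (j+1) = 1 by rw [← hAd]; exact hAm.coeff_natDegree,
            show B.coeff (j+1) = 1 by rw [← hBd]; exact hBm.coeff_natDegree, sub_self]
      · rw [Polynomial.coeff_eq_zero_of_natDegree_lt (by omega), Polynomial.coeff_eq_zero_of_natDegree_lt (by omega),
          sub_self]
  have hQi : Q = Lagrange.interpolate s a (fun k => Q.eval (a k)) :=
    Lagrange.eq_interpolate hinj hdeg
  have hQk : ∀ k ∈ s, Q.eval (a k) = -((a k - 1) * ∏ l ∈ s.erase k, (a k - a l - 1)) := by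
    intro k hk
    have hBk : B.eval (a k) = 0 := by
      rw [hB, Polynomial.eval_mul, Polynomial.eval_prod]
      have : (∏ l ∈ s, Polynomial.eval (a k) (Polynomial.X - Polynomial.C (a l))) = 0 :=
        Finset.prod_eq_zero hk (by simp)
      rw [this, mul_zero]
    have hAk : A.eval (a k) = -((a k - 1) * ∏ l ∈ s.erase k, (a k - a l - 1)) := by
      rw [hA, Polynomial.eval_mul, Polynomial.eval_prod]
      have h1 : ∀ l ∈ s, Polynomial.eval (a k) (Polynomial.X - Polynomial.C (a l + 1)) = a k - a l - 1 := fun l _ => by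
        simp only [Polynomial.eval_sub, Polynomial.eval_X, Polynomial.eval_C]; ring
      rw [Finset.prod_congr rfl h1, ← Finset.mul_prod_erase _ _ hk]
      simp only [Polynomial.eval_sub, Polynomial.eval_X, Polynomial.eval_C]
      ring
    rw [hQ, Polynomial.eval_sub, hAk, hBk, sub_zero]
  have hbk : ∀ k ∈ s, (Lagrange.basis s a k).eval b
      = ∏ l ∈ s.erase k, ((a k - a l)⁻¹ * (b - a l)) := by
    intro k hk
    rw [Lagrange.basis, Polynomial.eval_prod]
    exact Finset.prod_congr rfl fun l _ => by
      simp [Lagrange.basisDivisor]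
  set P : ℚ := ∏ l ∈ s, (b - a l) with hP
  have hPne : P ≠ 0 := by
    rw [hP, Finset.prod_ne_zero_iff]
    intro l hl
    exact sub_ne_zero_of_ne (Ne.symm (hane l hl))
  have hE3 : Q.eval b = ∑ k ∈ s, cf a k j * (a k - b)⁻¹ * P := by
    conv_lhs => rw [hQi]
    rw [Lagrange.interpolate_apply, Polynomial.eval_finset_sum]
    refine Finset.sum_congr rfl fun k hk => ?_
    rw [Polynomial.eval_mul, Polynomial.eval_C, hQk k hk, hbk k hk]
    have herase : ∏ l ∈ s.erase k, ((a k - a l)⁻¹ * (b - a l))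
        = (∏ l ∈ s.erase k, (a k - a l)⁻¹) * (∏ l ∈ s.erase k, (b - a l)) :=
      Finset.prod_mul_distrib
    have hPk : (b - a k) * ∏ l ∈ s.erase k, (b - a l) = P :=
      Finset.mul_prod_erase s (fun l => b - a l) hk
    have hbkne : b - a k ≠ 0 := sub_ne_zero_of_ne (Ne.symm (hane k hk))
    have hpe : ∏ l ∈ s.erase k, (b - a l) = (b - a k)⁻¹ * P := by
      field_simp [← hPk]
      linear_combination hPk
    rw [herase, hpe]
    have hcf : cf a k j = (a k - 1) * ((∏ l ∈ s.erase k, (a k - a l - 1))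
        * ∏ l ∈ s.erase k, (a k - a l)⁻¹) := by
      rw [cf, ← Finset.prod_mul_distrib]
    rw [hcf]
    have : (a k - b)⁻¹ = -(b - a k)⁻¹ := by
      rw [← inv_neg, neg_sub]
    rw [this]; ring
  have hE2 : Q.eval b = (b - 1) * (∏ l ∈ s, (b - a l - 1)) - (b - ((j:ℚ)+1)) * P := by
    rw [hQ, Polynomial.eval_sub, hA, hB, Polynomial.eval_mul, Polynomial.eval_mul, Polynomial.eval_prod, Polynomial.eval_prod]
    simp only [Polynomial.eval_sub, Polynomial.eval_X, Polynomial.eval_C]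
    rw [hP]
    congr 2
    · exact Finset.prod_congr rfl fun l _ => by ring
  have hE1 : cf a (j+1) (j+1) * P = (b - 1) * ∏ l ∈ s, (b - a l - 1) := by
    have he : (Icc 1 (j+1)).erase (j+1) = s := by
      rw [Icc_right 1 j (by omega), Finset.erase_insert (by simp [hs])]
    rw [cf, he, Finset.prod_mul_distrib, ← hbdef]
    have : (∏ l ∈ s, (b - a l)⁻¹) * P = 1 := by
      rw [Finset.prod_inv_distrib]
      exact inv_mul_cancel₀ hPne
    calc (b - 1) * ((∏ l ∈ s, (b - a l - 1)) * ∏ l ∈ s, (b - a l)⁻¹) * P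
        = (b - 1) * (∏ l ∈ s, (b - a l - 1)) * ((∏ l ∈ s, (b - a l)⁻¹) * P) := by ring
      _ = (b - 1) * ∏ l ∈ s, (b - a l - 1) := by rw [this, mul_one]
  have key : cf a (j+1) (j+1) * P
      = (b - ((j:ℚ)+1) + ∑ k ∈ Icc 1 j, cf a k j * (a k - b)⁻¹) * P := by
    rw [hE1]
    have h2 : (b - 1) * ∏ l ∈ s, (b - a l - 1)
        = (∑ k ∈ s, cf a k j * (a k - b)⁻¹ * P) + (b - ((j:ℚ)+1)) * P := by
      rw [← hE3, hE2]; ring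
    rw [h2, add_mul, ← Finset.sum_mul, ← hs]
    ring
  exact mul_right_cancel₀ hPne key

lemma sum_shift (f : ℕ → ℚ) : ∀ m, ∑ k ∈ range m, f (k+1) = ∑ k ∈ Icc 1 m, f k := by
  intro m
  induction m with
  | zero => simp
  | succ m ih =>
      rw [Finset.sum_range_succ, ih, Icc_right 1 m (by omega),
        Finset.sum_insert (by simp)]
      ring

lemma diag (n : ℕ)
    (ha : ∀ k l, 1 ≤ k → k ≤ n → 1 ≤ l → l ≤ n → a k = a l → k = l) :
    ∀ j, j ≤ n → ∑ k ∈ Icc 1 j, cf a k j = ∑ k ∈ Icc 1 j, (a k - (k:ℚ)) := by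
  intro j
  induction j with
  | zero => simp
  | succ j ih =>
      intro hj
      rw [Icc_right 1 j (by omega), Finset.sum_insert (by simp),
        Finset.sum_insert (by simp)]
      have per : ∀ k ∈ Icc 1 j, cf a k (j+1)
          = cf a k j - cf a k j * (a k - a (j+1))⁻¹ := by
        intro k hk
        rw [mem_Icc] at hk
        have hy : a k - a (j+1) ≠ 0 := by
          intro h0
          have : k = j + 1 := ha k (j+1) hk.1 (by omega) (by omega) (by omega)
            (by linarith [sub_eq_zero.mp h0])
          omega
        rw [cf_succ a k j hk.2]
        have : (a k - a (j+1) - 1) * (a k - a (j+1))⁻¹ = 1 - (a k - a (j+1))⁻¹ := by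
          field_simp
        rw [this]; ring
      rw [Finset.sum_congr rfl per, Finset.sum_sub_distrib, ih (by omega),
        lemF a n j hj ha]
      push_cast
      ring

lemma closedform (n : ℕ)
    (ha : ∀ k l, 1 ≤ k → k ≤ n → 1 ≤ l → l ≤ n → a k = a l → k = l) :
    ∀ i j, j ≤ i → i ≤ n → Gq a i j = ∑ k ∈ Icc 1 j, cf a k j * tf a k j i := by
  intro i
  induction i with
  | zero =>
      intro j hj _
      interval_cases j
      simp [Gq_zero]
  | succ i IH =>
      intro j hj hn
      match j with
      | 0 => simp [Gq_zero]
      | j + 1 =>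
        by_cases hij : i = j
        · subst hij
          show Gq a (i+1) (i+1) = _
          have : Gq a (i+1) (i+1) = ∑ k ∈ Finset.range (i+1), (a (k+1) - ((k:ℚ)+1)) := by
            simp [Gq]
          rw [this]
          have h2 : ∀ k ∈ Icc 1 (i+1), cf a k (i+1) * tf a k (i+1) (i+1) = cf a k (i+1) := by
            intro k _; rw [tf_diag, mul_one]
          rw [Finset.sum_congr rfl h2, diag a n ha (i+1) hn]
          have h3 : ∀ k, a (k+1) - ((k:ℚ)+1) = a (k+1) - ((k+1 : ℕ):ℚ) := by
            intro k; push_cast; ring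
          rw [Finset.sum_congr rfl (fun k _ => h3 k)]
          exact sum_shift (fun k => a k - (k:ℚ)) (i+1)
        · have hji : j + 1 ≤ i := by omega
          have hrec : Gq a (i+1) (j+1)
              = Gq a i j + (a (j+1) - a (i+1) - 1) * Gq a i (j+1) := by
            show (if i = j then _ else _) = _
            rw [if_neg hij]
          rw [hrec, IH j (by omega) (by omega), IH (j+1) hji (by omega)]
          rw [Icc_right 1 j (by omega), Finset.sum_insert (by simp),
            Finset.sum_insert (by simp)]
          have per : ∀ k ∈ Icc 1 j,
              cf a k j * tf a k j i + (a (j+1) - a (i+1) - 1) * (cf a k (j+1) * tf a k (j+1) i)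
              = cf a k (j+1) * tf a k (j+1) (i+1) := by
            intro k hk
            rw [mem_Icc] at hk
            have hy : a k - a (j+1) ≠ 0 := by
              intro h0
              have : k = j + 1 := ha k (j+1) hk.1 (by omega) (by omega) (by omega)
                (by linarith [sub_eq_zero.mp h0])
              omega
            have key : cf a k j * (a k - a (j+1) - 1) = cf a k (j+1) * (a k - a (j+1)) := by
              rw [cf_succ a k j hk.2]
              field_simp
            rw [tf_left a k j i hji, tf_right a k (j+1) i (by omega)]
            linear_combination (tf a k (j+1) i) * key
          rw [tf_right a (j+1) (j+1) i (by omega)]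
          have hsum : ∑ k ∈ Icc 1 j, cf a k (j+1) * tf a k (j+1) (i+1)
              = (∑ k ∈ Icc 1 j, cf a k j * tf a k j i)
                + (a (j+1) - a (i+1) - 1) * ∑ k ∈ Icc 1 j, cf a k (j+1) * tf a k (j+1) i := by
            rw [Finset.mul_sum, ← Finset.sum_add_distrib]
            exact Finset.sum_congr rfl fun k hk => (per k hk).symm
          rw [hsum]
          ring

section spec

variable {n : ℕ} (w : Equiv.Perm (Fin n))

noncomputable def av (k : ℕ) : ℚ :=
  if h : k - 1 < n then ((w ⟨k - 1, h⟩ : ℕ) : ℚ) + 1 else 0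

noncomputable def gv : Option (Fin n) → Polynomial ℚ :=
  fun v => Option.elim v (Polynomial.X : Polynomial ℚ)
    (fun i => (((w i : ℕ) + 1 : ℕ) : Polynomial ℚ) * Polynomial.X)

lemma aeval_tv : MvPolynomial.aeval (gv w) (tv n) = Polynomial.X := by
  rw [tv, MvPolynomial.aeval_X]; rfl

lemma aeval_xv (k : ℕ) :
    MvPolynomial.aeval (gv w) (xv n k) = Polynomial.C (av w k) * Polynomial.X := by
  rw [xv, av]
  split
  · rw [MvPolynomial.aeval_X]
    show (((w _ : ℕ) + 1 : ℕ) : Polynomial ℚ) * Polynomial.X = _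
    push_cast
    simp only [map_add, Polynomial.C_eq_natCast, Polynomial.C_1]
    try ring
  · simp

lemma aeval_pp (i : ℕ) :
    MvPolynomial.aeval (gv w) (pp n i)
      = Polynomial.C (∑ k ∈ Finset.range i, (av w (k+1) - ((k:ℚ)+1))) * Polynomial.X := by
  rw [pp, map_sum, map_sum, Finset.sum_mul]
  refine Finset.sum_congr rfl fun k _ => ?_
  rw [map_sub, map_mul, aeval_xv, aeval_tv, MvPolynomial.aeval_C, map_sub]
  show _ - (Polynomial.C ((k:ℚ)+1)) * _ = _
  ring

lemma spec : ∀ i j : ℕ, j ≤ i → i ≤ n →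
    MvPolynomial.aeval (gv w) (ff n i j)
      = Polynomial.C (Gq (av w) i j) * Polynomial.X ^ (i - j + 1) := by
  intro i
  induction i with
  | zero =>
      intro j hj _
      interval_cases j
      rw [show ff n 0 0 = 0 from rfl, show Gq (av w) 0 0 = (0:ℚ) from rfl]
      simp
  | succ i IH =>
      intro j hj hn
      match j with
      | 0 =>
          rw [show ff n (i+1) 0 = 0 from rfl, show Gq (av w) (i+1) 0 = (0:ℚ) from rfl]
          simp
      | j + 1 =>
        by_cases hij : i = j
        · subst hij
          rw [show ff n (i+1) (i+1) = if i = i then pp n (i+1)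
                else ff n i i + (xv n (i+1) - xv n (i+1) - tv n) * ff n i (i+1) from rfl,
              if_pos rfl, aeval_pp,
              show Gq (av w) (i+1) (i+1) = if i = i
                then ∑ k ∈ Finset.range (i+1), (av w (k+1) - (k+1))
                else Gq (av w) i i + (av w (i+1) - av w (i+1) - 1) * Gq (av w) i (i+1) from rfl,
              if_pos rfl]
          have : (i+1) - (i+1) + 1 = 1 := by omega
          rw [this, pow_one]
        · have hji : j + 1 ≤ i := by omega
          rw [show ff n (i+1) (j+1) = if i = j then pp n (j+1)
                else ff n i j + (xv n (j+1) - xv n (i+1) - tv n) * ff n i (j+1) from rfl,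
              if_neg hij,
              show Gq (av w) (i+1) (j+1) = if i = j
                then ∑ k ∈ Finset.range (j+1), (av w (k+1) - (k+1))
                else Gq (av w) i j + (av w (j+1) - av w (i+1) - 1) * Gq (av w) i (j+1) from rfl,
              if_neg hij]
          rw [map_add, map_mul, map_sub, map_sub, aeval_xv, aeval_xv, aeval_tv,
            IH j (by omega) (by omega), IH (j+1) hji (by omega)]
          have e1 : i - j = (i - (j+1)) + 1 := by omega
          have e2 : (i+1) - (j+1) = (i - (j+1)) + 1 := by omega
          rw [e1, e2]
          simp only [map_add, map_sub, map_mul, map_one]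
          ring

end spec

end Stmt11Aux

/-- Let `h` be a Hessenberg function and let `w` be a permutation of `{1,…,n}` (realized
as `w : Equiv.Perm (Fin n)`, with `k : Fin n` corresponding to `k+1 ∈ {1,…,n}`) such that
for every `k` with `w(k) ≥ 2` one has `w⁻¹(w(k)-1) ≤ h(k)`.  Then for every `1 ≤ j ≤ n`,
substituting `x_i ↦ w(i)·t` (and `t ↦ t`) into `f_{h(j),j}` yields the zero polynomial
in `ℚ[t]`. -/
theorem stmt11 (n : ℕ) (h : ℕ → ℕ)
    (hH1 : ∀ j : ℕ, 1 ≤ j → j ≤ n → j ≤ h j ∧ h j ≤ n)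
    (hH2 : ∀ j : ℕ, 1 ≤ j → j < n → h j ≤ h (j + 1))
    (w : Equiv.Perm (Fin n))
    (hw : ∀ k : Fin n, 1 ≤ (w k : ℕ) →
      ((w.symm (⟨(w k : ℕ) - 1,
          Nat.lt_of_le_of_lt (Nat.sub_le _ _) (w k).isLt⟩ : Fin n) : ℕ) + 1)
        ≤ h ((k : ℕ) + 1)) :
    ∀ j : ℕ, 1 ≤ j → j ≤ n →
      MvPolynomial.aeval
        (fun v : Option (Fin n) => Option.elim v (Polynomial.X : Polynomial ℚ)
          (fun i => (((w i : ℕ) + 1 : ℕ) : Polynomial ℚ) * Polynomial.X))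
        (ff n (h j) j) = 0 := by
  intro j hj1 hjn
  classical
  -- injectivity of the values
  have ha : ∀ k l, 1 ≤ k → k ≤ n → 1 ≤ l → l ≤ n →
      Stmt11Aux.av w k = Stmt11Aux.av w l → k = l := by
    intro k l hk1 hkn hl1 hln he
    have hk : k - 1 < n := by omega
    have hl : l - 1 < n := by omega
    rw [Stmt11Aux.av, dif_pos hk, Stmt11Aux.av, dif_pos hl] at he
    have h2 : ((w ⟨k-1, hk⟩ : ℕ) : ℚ) = ((w ⟨l-1, hl⟩ : ℕ) : ℚ) := by linarith
    have h3 : (w ⟨k-1, hk⟩ : ℕ) = (w ⟨l-1, hl⟩ : ℕ) := by exact_mod_cast h2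
    have h4 : w ⟨k-1, hk⟩ = w ⟨l-1, hl⟩ := Fin.ext h3
    have h5 := w.injective h4
    have h6 : k - 1 = l - 1 := congrArg Fin.val h5
    omega
  -- monotonicity of h
  have hmono : ∀ m, m ≤ n → ∀ k, 1 ≤ k → k ≤ m → h k ≤ h m := by
    intro m
    induction m with
    | zero => intro _ k hk1 hk2; omega
    | succ m ih =>
        intro hm k hk1 hk2
        rcases Nat.eq_or_lt_of_le hk2 with he | hlt
        · rw [he]
        · have hk2' : k ≤ m := by omega
          have h1 : h k ≤ h m := ih (by omega) k hk1 hk2'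
          have h2 : h m ≤ h (m+1) := hH2 m (by omega) (by omega)
          omega
  -- the condition on fixed points, in terms of `av`
  have hcond : ∀ k, 1 ≤ k → k ≤ n → 2 ≤ Stmt11Aux.av w k →
      ∃ m, 1 ≤ m ∧ m ≤ n ∧ m ≤ h k ∧ Stmt11Aux.av w m = Stmt11Aux.av w k - 1 := by
    intro k hk1 hkn h2
    have hk : k - 1 < n := by omega
    set kf : Fin n := ⟨k - 1, hk⟩ with hkf
    have hav : Stmt11Aux.av w k = ((w kf : ℕ) : ℚ) + 1 := by
      rw [Stmt11Aux.av, dif_pos hk]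
    have hw1 : 1 ≤ (w kf : ℕ) := by
      rw [hav] at h2
      by_contra hc
      have : (w kf : ℕ) = 0 := by omega
      rw [this] at h2; norm_num at h2
    have hhw := hw kf hw1
    set mf : Fin n := w.symm (⟨(w kf : ℕ) - 1,
      Nat.lt_of_le_of_lt (Nat.sub_le _ _) (w kf).isLt⟩ : Fin n) with hmf
    refine ⟨(mf : ℕ) + 1, by omega, by omega, ?_, ?_⟩
    · have : (kf : ℕ) + 1 = k := by simp [hkf]; omega
      rw [← this]; exact hhw
    · have hm : ((mf : ℕ) + 1) - 1 < n := by simp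
      rw [Stmt11Aux.av, dif_pos hm]
      have he : (⟨(mf : ℕ) + 1 - 1, hm⟩ : Fin n) = mf := by
        apply Fin.ext; simp
      rw [he, hmf, Equiv.apply_symm_apply]
      rw [hav]
      have : (((w kf : ℕ) - 1 : ℕ) : ℚ) = ((w kf : ℕ) : ℚ) - 1 := by
        have h9 := Nat.cast_sub (R := ℚ) hw1
        simpa using h9
      rw [this]; ring
  -- bounds
  obtain ⟨hjh, hhn⟩ := hH1 j hj1 hjn
  -- the scalar vanishes
  have hG : Stmt11Aux.Gq (Stmt11Aux.av w) (h j) j = 0 := by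
    rw [Stmt11Aux.closedform (Stmt11Aux.av w) n ha (h j) j hjh hhn]
    apply Finset.sum_eq_zero
    intro k hk
    rw [Finset.mem_Icc] at hk
    by_cases h2 : 2 ≤ Stmt11Aux.av w k
    · obtain ⟨m, hm1, hmn, hmhk, hma⟩ := hcond k hk.1 (by omega) h2
      have hmi : m ≤ h j := le_trans hmhk (hmono j hjn k hk.1 hk.2)
      have hmk : m ≠ k := by
        intro he; rw [he] at hma; linarith
      by_cases h3 : m ≤ j
      · have hmem : m ∈ (Finset.Icc 1 j).erase k :=
          Finset.mem_erase.mpr ⟨hmk, Finset.mem_Icc.mpr ⟨hm1, h3⟩⟩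
        have hz : (Stmt11Aux.av w k - Stmt11Aux.av w m - 1)
            * (Stmt11Aux.av w k - Stmt11Aux.av w m)⁻¹ = 0 := by
          have : Stmt11Aux.av w k - Stmt11Aux.av w m - 1 = 0 := by rw [hma]; ring
          rw [this, zero_mul]
        have : Stmt11Aux.cf (Stmt11Aux.av w) k j = 0 := by
          rw [Stmt11Aux.cf, Finset.prod_eq_zero hmem hz, mul_zero]
        rw [this, zero_mul]
      · have hmem : m ∈ Finset.Icc (j+1) (h j) := Finset.mem_Icc.mpr ⟨by omega, hmi⟩
        have hz : Stmt11Aux.av w k - Stmt11Aux.av w m - 1 = 0 := by rw [hma]; ring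
        have : Stmt11Aux.tf (Stmt11Aux.av w) k j (h j) = 0 := by
          rw [Stmt11Aux.tf]
          exact Finset.prod_eq_zero hmem hz
        rw [this, mul_zero]
    · -- av w k = 1
      have hkk : k - 1 < n := by omega
      have hav : Stmt11Aux.av w k = ((w ⟨k-1, hkk⟩ : ℕ) : ℚ) + 1 := by
        rw [Stmt11Aux.av, dif_pos hkk]
      have hc : (w ⟨k-1, hkk⟩ : ℕ) = 0 := by
        by_contra hc
        apply h2
        rw [hav]
        have : (1:ℚ) ≤ ((w ⟨k-1, hkk⟩ : ℕ) : ℚ) := by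
          exact_mod_cast Nat.one_le_iff_ne_zero.mpr hc
        linarith
      have : Stmt11Aux.cf (Stmt11Aux.av w) k j = 0 := by
        rw [Stmt11Aux.cf, hav, hc]
        norm_num
      rw [this, zero_mul]
  have hspec := Stmt11Aux.spec w (h j) j hjh hhn
  show MvPolynomial.aeval (Stmt11Aux.gv w) (ff n (h j) j) = 0
  rw [hspec, hG]
  simp
end

section
/- Let h : {1,…,n} → {1,…,n} be any Hessenberg function. Then the n polynomials f̌_{h(1),1}, f̌_{h(2),2}, …, f̌_{h(n),n} form a regular sequence in the polynomial ring ℚ[x_1,…,x_n]. -/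
open MvPolynomial Finset

/-- `f̌_{i,j} = ∑_{k=1}^{j} x_k ∏_{ℓ=j+1}^{i} (x_k - x_ℓ)`, the `t = 0` specialization of
`f_{i,j}` (the empty product is `1` when `i = j`). -/
noncomputable def fcheck (n : ℕ) (i j : ℕ) : MvPolynomial (Fin n) ℚ :=
  ∑ k ∈ Finset.Icc 1 j, xq n k * ∏ l ∈ Finset.Icc (j + 1) i, (xq n k - xq n l)

namespace Stmt16

open RingTheory.Sequence Submodule Function Pointwise

universe u v

section Generic

variable {R : Type u} [CommRing R]

lemma smul_top_eq_span (r : R) :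
    (r • (⊤ : Submodule R R)) = (Ideal.span {r} : Ideal R) := by
  rw [← Submodule.ideal_span_singleton_smul, smul_eq_mul, Ideal.mul_top]

lemma mem_smul_top_iff' {M : Type v} [AddCommGroup M] [Module R M] (r : R) (x : M) :
    x ∈ r • (⊤ : Submodule R M) ↔ ∃ y, r • y = x := by
  rw [← SetLike.mem_coe, Submodule.coe_pointwise_smul]
  constructor
  · rintro ⟨y, -, rfl⟩; exact ⟨y, rfl⟩
  · rintro ⟨y, rfl⟩; exact ⟨y, trivial, rfl⟩

lemma isSMulRegular_of_ne_zero [IsDomain R] {p : R} (hp : p ≠ 0) :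
    IsSMulRegular R p := fun x y hxy => by
  simp only [smul_eq_mul] at hxy
  exact mul_left_cancel₀ hp hxy

/-- If `rs` is weakly regular on the two ends of a short exact sequence, it is weakly
regular on the middle. -/
lemma isWeaklyRegular_of_exact (rs : List R) :
    ∀ {M M' M'' : Type v} [AddCommGroup M] [Module R M] [AddCommGroup M'] [Module R M']
      [AddCommGroup M''] [Module R M'']
      (f : M' →ₗ[R] M) (g : M →ₗ[R] M''),
      Function.Injective f → Function.Surjective g → Function.Exact f g →
      IsWeaklyRegular M' rs → IsWeaklyRegular M'' rs → IsWeaklyRegular M rs := by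
  induction rs with
  | nil => intros; exact IsWeaklyRegular.nil _ _
  | cons r rs ih =>
    intro M M' M'' _ _ _ _ _ _ f g hf hg hfg h1 h2
    rw [isWeaklyRegular_cons_iff] at h1 h2 ⊢
    obtain ⟨h1r, h1rs⟩ := h1
    obtain ⟨h2r, h2rs⟩ := h2
    constructor
    · -- four lemma: r is smul-regular on M
      intro x y hxy
      rw [← sub_eq_zero]
      have hrz : r • (x - y) = 0 := by
        rw [smul_sub, sub_eq_zero]; exact hxy
      set z := x - y with hz
      have hgz : g z = 0 := by
        have h0 : r • g z = r • (0 : M'') := by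
          rw [← map_smul, hrz, map_zero, smul_zero]
        exact h2r h0
      obtain ⟨m', hm'⟩ := (hfg z).mp hgz
      have hfm : f (r • m') = f 0 := by
        rw [map_smul, hm', hrz, map_zero]
      have hr0 : r • m' = 0 := by
        have := hf hfm
        simpa using this
      have : m' = 0 := h1r (show r • m' = r • (0 : M') by rw [hr0, smul_zero])
      rw [← hm', this, map_zero]
    · refine ih (QuotSMulTop.map r f) (QuotSMulTop.map r g) ?_
        (QuotSMulTop.map_surjective r hg) (QuotSMulTop.map_exact r hfg hg) h1rs h2rs
      -- injectivity of the induced map, uses regularity of r on M''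
      intro a b hab
      rw [← sub_eq_zero]
      obtain ⟨z, hzeq⟩ := Submodule.Quotient.mk_surjective _ (a - b)
      rw [← hzeq]
      have h0 : QuotSMulTop.map r f (Submodule.Quotient.mk z) = 0 := by
        rw [hzeq, map_sub, sub_eq_zero]; exact hab
      rw [QuotSMulTop.map_apply_mk, Submodule.Quotient.mk_eq_zero] at h0
      obtain ⟨m, hm⟩ := (mem_smul_top_iff' r (f z)).mp h0
      have hgm : r • g m = r • (0 : M'') := by
        rw [← map_smul, hm]
        have := (hfg (f z)).mpr ⟨z, rfl⟩
        rw [this, smul_zero]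
      obtain ⟨m₀, hm₀⟩ := (hfg m).mp (h2r hgm)
      have : f z = f (r • m₀) := by rw [map_smul, hm₀, hm]
      rw [Submodule.Quotient.mk_eq_zero]
      exact (mem_smul_top_iff' r z).mpr ⟨m₀, (hf this).symm⟩

/-- If `(a :: rs)` and `(b :: rs)` are regular, so is `(a * b :: rs)`. -/
lemma isRegular_mul_cons [IsDomain R] {a b : R} {rs : List R}
    (ha : IsRegular R (a :: rs)) (hb : IsRegular R (b :: rs)) :
    IsRegular R ((a * b) :: rs) := by
  rw [isRegular_cons_iff] at ha hb ⊢
  obtain ⟨ha1, ha2⟩ := ha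
  obtain ⟨hb1, hb2⟩ := hb
  refine ⟨ha1.mul hb1, ?_⟩
  rw [isRegular_iff] at ha2 hb2 ⊢
  -- the short exact sequence 0 → R/a → R/ab → R/b → 0
  have hab_le_a : (a * b) • (⊤ : Submodule R R) ≤ a • ⊤ := by
    intro x hx
    obtain ⟨y, rfl⟩ := (mem_smul_top_iff' _ x).mp hx
    exact (mem_smul_top_iff' _ _).mpr ⟨b * y, by simp [smul_eq_mul]; ring⟩
  have hab_le_b : (a * b) • (⊤ : Submodule R R) ≤ b • ⊤ := by
    intro x hx
    obtain ⟨y, rfl⟩ := (mem_smul_top_iff' _ x).mp hx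
    exact (mem_smul_top_iff' _ _).mpr ⟨a * y, by simp [smul_eq_mul]; ring⟩
  -- f : R/a → R/ab  induced by multiplication by b
  have hcond : (a • (⊤ : Submodule R R)) ≤ Submodule.comap (LinearMap.lsmul R R b) ((a*b) • ⊤) := by
    intro x hx
    obtain ⟨y, rfl⟩ := (mem_smul_top_iff' _ x).mp hx
    simp only [Submodule.mem_comap, LinearMap.lsmul_apply]
    exact (mem_smul_top_iff' _ _).mpr ⟨y, by simp [smul_eq_mul]; ring⟩
  set f : QuotSMulTop a R →ₗ[R] QuotSMulTop (a*b) R :=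
    Submodule.mapQ _ _ (LinearMap.lsmul R R b) hcond with hfdef
  set g : QuotSMulTop (a*b) R →ₗ[R] QuotSMulTop b R :=
    Submodule.mapQ _ _ LinearMap.id (fun x hx => hab_le_b hx) with hgdef
  have hfmk : ∀ x : R, f (Submodule.Quotient.mk x) = Submodule.Quotient.mk (b * x) := by
    intro x
    rw [hfdef, Submodule.mapQ_apply, LinearMap.lsmul_apply, smul_eq_mul]
  have hgmk : ∀ x : R, g (Submodule.Quotient.mk x) = Submodule.Quotient.mk x := by
    intro x
    rw [hgdef, Submodule.mapQ_apply, LinearMap.id_apply]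
  have hfinj : Function.Injective f := by
    intro p q hpq
    rw [← sub_eq_zero]
    obtain ⟨z, hz⟩ := Submodule.Quotient.mk_surjective _ (p - q)
    rw [← hz]
    have h0 : f (Submodule.Quotient.mk z) = 0 := by
      rw [hz, map_sub, sub_eq_zero]; exact hpq
    rw [hfmk, Submodule.Quotient.mk_eq_zero] at h0
    obtain ⟨w, hw⟩ := (mem_smul_top_iff' _ _).mp h0
    simp only [smul_eq_mul] at hw
    have hzw : b * (a * w) = b * z := by rw [← hw]; ring
    have := hb1 (show b • (a * w) = b • z by simpa [smul_eq_mul] using hzw)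
    rw [Submodule.Quotient.mk_eq_zero]
    exact (mem_smul_top_iff' _ _).mpr ⟨w, by simpa [smul_eq_mul] using this⟩
  have hgsurj : Function.Surjective g := by
    intro q
    obtain ⟨x, rfl⟩ := Submodule.Quotient.mk_surjective _ q
    exact ⟨Submodule.Quotient.mk x, hgmk x⟩
  have hexact : Function.Exact f g := by
    intro q
    obtain ⟨x, rfl⟩ := Submodule.Quotient.mk_surjective _ q
    constructor
    · intro hq
      rw [hgmk, Submodule.Quotient.mk_eq_zero] at hq
      obtain ⟨y, hy⟩ := (mem_smul_top_iff' _ _).mp hq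
      refine ⟨Submodule.Quotient.mk y, ?_⟩
      have hby : b * y = x := by simpa [smul_eq_mul] using hy
      rw [hfmk, hby]
    · rintro ⟨p, hp⟩
      obtain ⟨y, hy⟩ := Submodule.Quotient.mk_surjective _ p
      rw [← hp, ← hy, hfmk, hgmk, Submodule.Quotient.mk_eq_zero]
      exact (mem_smul_top_iff' _ _).mpr ⟨y, by simp [smul_eq_mul]⟩
  constructor
  · exact isWeaklyRegular_of_exact rs f g hfinj hgsurj hexact ha2.1 hb2.1
  · -- properness, transported through the surjection onto R/(a)
    set π : QuotSMulTop (a*b) R →ₗ[R] QuotSMulTop a R :=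
      Submodule.mapQ _ _ LinearMap.id (fun x hx => hab_le_a hx) with hπdef
    have hπsurj : Function.Surjective π := by
      intro q
      obtain ⟨x, rfl⟩ := Submodule.Quotient.mk_surjective _ q
      exact ⟨Submodule.Quotient.mk x, by rw [hπdef, Submodule.mapQ_apply, LinearMap.id_apply]⟩
    intro htop
    apply ha2.2
    have hmap := congrArg (Submodule.map π) htop
    rw [Submodule.map_smul''] at hmap
    rw [Submodule.map_top, LinearMap.range_eq_top.mpr hπsurj] at hmap
    exact hmap

/-- Regularity of a sequence headed by a product, given regularity for each factor. -/
lemma isRegular_cons_prod [IsDomain R] {rs : List R} (s : Finset ℕ)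
    (fc : ℕ → R) (a : R) (ha : IsRegular R (a :: rs))
    (hf : ∀ m ∈ s, IsRegular R (fc m :: rs)) :
    IsRegular R ((a * ∏ m ∈ s, fc m) :: rs) := by
  classical
  induction s using Finset.induction with
  | empty => simpa using ha
  | @insert x s hx ih =>
    rw [Finset.prod_insert hx]
    have h1 : IsRegular R ((fc x) :: rs) := hf x (Finset.mem_insert_self x s)
    have h2 : IsRegular R ((a * ∏ m ∈ s, fc m) :: rs) :=
      ih (fun m hm => hf m (Finset.mem_insert_of_mem hm))
    have := isRegular_mul_cons h1 h2
    have hre : fc x * (a * ∏ m ∈ s, fc m) = a * (fc x * ∏ m ∈ s, fc m) := by ring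
    rwa [hre] at this

end Generic

section Poly

/-- Short name for the polynomial ring. -/
abbrev P (n : ℕ) := MvPolynomial (Fin n) ℚ

variable {n : ℕ}

/-- Substitution sending the first variable to `t` and shifting the others down. -/
noncomputable def subst (t : P n) : P (n + 1) →ₐ[ℚ] P n := aeval (Fin.cases t X)

lemma subst_X_zero (t : P n) : subst t (X 0) = t := by simp [subst]

lemma subst_X_succ (t : P n) (i : Fin n) : subst t (X i.succ) = X i := by simp [subst]

lemma subst_C (t : P n) (a : ℚ) : subst t (C a) = C a := by
  simp [subst, algebraMap_eq]

lemma subst_rename (t : P n) (p : P n) : subst t (rename Fin.succ p) = p := by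
  rw [subst, aeval_rename]
  have h : ((Fin.cases t X : Fin (n+1) → P n) ∘ Fin.succ) = (X : Fin n → P n) :=
    funext fun i => Fin.cases_succ i
  rw [h]
  simp

lemma subst_surjective (t : P n) : Function.Surjective (subst t) :=
  fun p => ⟨rename Fin.succ p, subst_rename t p⟩

lemma sub_mem_ker (t : P n) (p : P (n + 1)) :
    p - rename Fin.succ (subst t p) ∈ Ideal.span {(X 0 : P (n + 1)) - rename Fin.succ t} := by
  set I := Ideal.span {(X 0 : P (n + 1)) - rename Fin.succ t} with hI
  induction p using MvPolynomial.induction_on with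
  | C a =>
    rw [subst_C]
    simp [rename_C]
  | add p q hp hq =>
    have : p + q - rename Fin.succ (subst t (p + q)) =
        (p - rename Fin.succ (subst t p)) + (q - rename Fin.succ (subst t q)) := by
      rw [map_add, map_add]; ring
    rw [this]
    exact add_mem hp hq
  | mul_X p i hp =>
    have key : p * X i - rename Fin.succ (subst t (p * X i)) =
        (p - rename Fin.succ (subst t p)) * X i +
          rename Fin.succ (subst t p) * (X i - rename Fin.succ (subst t (X i))) := by
      rw [map_mul, map_mul]; ring
    rw [key]
    refine add_mem (Ideal.mul_mem_right _ _ hp) (Ideal.mul_mem_left _ _ ?_)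
    induction i using Fin.cases with
    | zero => rw [subst_X_zero]; exact Ideal.subset_span rfl
    | succ j =>
      rw [subst_X_succ, rename_X]
      simp

lemma ker_subst (t : P n) :
    RingHom.ker (subst t).toRingHom =
      Ideal.span {(X 0 : P (n + 1)) - rename Fin.succ t} := by
  ext p
  constructor
  · intro hp
    have h0 : subst t p = 0 := hp
    have := sub_mem_ker t p
    rwa [h0, map_zero, sub_zero] at this
  · intro hp
    refine Ideal.span_le.mpr ?_ hp
    intro q hq
    simp only [Set.mem_singleton_iff] at hq
    subst hq
    simp only [SetLike.mem_coe, RingHom.mem_ker, AlgHom.toRingHom_eq_coe, RingHom.coe_coe]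
    rw [map_sub, subst_X_zero, subst_rename, sub_self]

/-- The semilinear (over `subst t`) map from `P (n+1)` to `P n`. -/
noncomputable def substSL (t : P n) : P (n + 1) →ₛₗ[(subst t).toRingHom] P n where
  toFun := subst t
  map_add' := map_add _
  map_smul' := fun r x => by
    simp only [smul_eq_mul, map_mul, AlgHom.toRingHom_eq_coe, RingHom.coe_coe]

/-- The additive equivalence `P (n+1) ⧸ L ≃+ P n`, when `L` generates the kernel. -/
noncomputable def substAddEquiv (t : P n) (L : P (n + 1))
    (hL : Ideal.span {L} = RingHom.ker (subst t).toRingHom) :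
    QuotSMulTop L (P (n + 1)) ≃+ P n := by
  letI : RingHomSurjective (subst t).toRingHom :=
    ⟨fun p => ⟨rename Fin.succ p, subst_rename t p⟩⟩
  refine AddEquiv.ofBijective
    (Submodule.liftQ (L • (⊤ : Submodule (P (n+1)) (P (n+1)))) (substSL t) ?_).toAddMonoidHom
    ⟨?_, ?_⟩
  · intro x hx
    obtain ⟨y, rfl⟩ := (mem_smul_top_iff' L x).mp hx
    have hLk : subst t L = 0 := by
      have : L ∈ RingHom.ker (subst t).toRingHom := hL ▸ Ideal.subset_span rfl
      exact this
    simp only [LinearMap.mem_ker, smul_eq_mul]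
    show subst t (L * y) = 0
    rw [map_mul, hLk, zero_mul]
  · intro x y hxy
    obtain ⟨x', rfl⟩ := Submodule.Quotient.mk_surjective _ x
    obtain ⟨y', rfl⟩ := Submodule.Quotient.mk_surjective _ y
    have hxy' : subst t x' = subst t y' := hxy
    have : x' - y' ∈ RingHom.ker (subst t).toRingHom := by
      show subst t (x' - y') = 0
      rw [map_sub, sub_eq_zero]
      exact hxy'
    rw [← hL, ← smul_top_eq_span] at this
    exact (Submodule.Quotient.eq _).mpr this
  · intro p
    exact ⟨Submodule.Quotient.mk (rename Fin.succ p), subst_rename t p⟩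

lemma substAddEquiv_mk (t : P n) (L : P (n + 1))
    (hL : Ideal.span {L} = RingHom.ker (subst t).toRingHom) (x : P (n + 1)) :
    substAddEquiv t L hL (Submodule.Quotient.mk x) = subst t x := rfl

open RingTheory.Sequence in
lemma isRegular_quot_iff (t : P n) (L : P (n + 1))
    (hL : Ideal.span {L} = RingHom.ker (subst t).toRingHom) (rs : List (P (n + 1))) :
    IsRegular (QuotSMulTop L (P (n + 1))) rs ↔ IsRegular (P n) (rs.map (subst t)) := by
  apply AddEquiv.isRegular_congr (e := substAddEquiv t L hL)
  refine List.forall₂_map_right_iff.mpr (List.forall₂_same.mpr ?_)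
  intro r _ x
  obtain ⟨y, rfl⟩ := Submodule.Quotient.mk_surjective _ x
  rw [← Submodule.Quotient.mk_smul, substAddEquiv_mk, substAddEquiv_mk,
    smul_eq_mul, smul_eq_mul, map_mul]

lemma xq_eq {k : ℕ} (h1 : 1 ≤ k) (h2 : k ≤ n) :
    xq n k = X (⟨k - 1, by omega⟩ : Fin n) := dif_pos _

lemma subst_xq_one (t : P n) : subst t (xq (n + 1) 1) = t := by
  rw [xq_eq le_rfl (by omega)]
  exact subst_X_zero t

lemma subst_xq (t : P n) {k : ℕ} (h1 : 1 ≤ k) (h2 : k ≤ n) :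
    subst t (xq (n + 1) (k + 1)) = xq n k := by
  rw [xq_eq (by omega : 1 ≤ k + 1) (by omega : k + 1 ≤ n + 1), xq_eq h1 h2]
  have he : (⟨k + 1 - 1, by omega⟩ : Fin (n + 1)) = Fin.succ ⟨k - 1, by omega⟩ := by
    ext
    simp [Fin.val_succ]
    omega
  rw [he, subst_X_succ]

/-- The weighted Hessenberg polynomials `∑ c_k x_k ∏ (x_k - x_l)`. -/
noncomputable def fgen (N : ℕ) (c : ℕ → ℚ) (H : ℕ → ℕ) (j : ℕ) : P N :=
  ∑ k ∈ Icc 1 j, C (c k) * (xq N k * ∏ l ∈ Icc (j + 1) (H j), (xq N k - xq N l))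

lemma prod_reindex (y : P n) (a b : ℕ) (hb : 1 ≤ b) :
    ∏ l ∈ Icc (a + 1) b, (y - xq n (l - 1)) = ∏ l ∈ Icc a (b - 1), (y - xq n l) := by
  have hmap : Icc (a + 1) b = (Icc a (b - 1)).map (addRightEmbedding 1) := by
    rw [Finset.map_add_right_Icc]
    congr 1
    omega
  rw [hmap, Finset.prod_map]
  refine Finset.prod_congr rfl fun l hl => ?_
  simp [addRightEmbedding_apply]

lemma sum_reindex (g : ℕ → P n) (b : ℕ) :
    ∑ k ∈ Icc 2 (b + 1), g k = ∑ i ∈ Icc 1 b, g (i + 1) := by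
  have hmap : Icc 2 (b + 1) = (Icc 1 b).map (addRightEmbedding 1) := by
    rw [Finset.map_add_right_Icc]
  rw [hmap, Finset.sum_map]
  refine Finset.sum_congr rfl fun i hi => ?_
  simp [addRightEmbedding_apply]

/-- Expanding the substitution of a weighted Hessenberg polynomial. -/
lemma subst_fgen_expand (c : ℕ → ℚ) (H : ℕ → ℕ) (t : P n) {j : ℕ}
    (hj1 : 1 ≤ j) (hjn : j ≤ n) (hH1 : j + 1 ≤ H (j + 1)) (hH2 : H (j + 1) ≤ n + 1) :
    subst t (fgen (n + 1) c H (j + 1))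
      = C (c 1) * (t * ∏ l ∈ Icc (j + 1) (H (j + 1) - 1), (t - xq n l))
        + ∑ i ∈ Icc 1 j, C (c (i + 1)) *
            (xq n i * ∏ l ∈ Icc (j + 1) (H (j + 1) - 1), (xq n i - xq n l)) := by
  set D := H (j + 1) with hD
  rw [fgen]
  have hsplit : Icc 1 (j + 1) = insert 1 (Icc 2 (j + 1)) := by
    ext x
    simp only [Finset.mem_Icc, Finset.mem_insert]
    omega
  have hnotmem : (1 : ℕ) ∉ Icc 2 (j + 1) := by simp
  rw [hsplit, Finset.sum_insert hnotmem, map_add, map_sum]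
  congr 1
  · -- the k = 1 term
    rw [map_mul, map_mul, subst_C, subst_xq_one, map_prod]
    congr 1
    congr 1
    have hc : ∀ l ∈ Icc (j + 1 + 1) D, subst t (xq (n + 1) 1 - xq (n + 1) l)
        = t - xq n (l - 1) := by
      intro l hl
      rw [Finset.mem_Icc] at hl
      have hl2 : l = (l - 1) + 1 := by omega
      rw [map_sub, subst_xq_one, hl2, subst_xq t (by omega) (by omega)]
      rw [← hl2]
    rw [Finset.prod_congr rfl hc]
    have := prod_reindex (n := n) t (j + 1) D (by omega)
    exact this
  · -- the k ≥ 2 terms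
    have hterm : ∀ k ∈ Icc 2 (j + 1),
        subst t (C (c k) * (xq (n + 1) k * ∏ l ∈ Icc (j + 1 + 1) D, (xq (n + 1) k - xq (n + 1) l)))
          = C (c k) * (xq n (k - 1) * ∏ l ∈ Icc (j + 1) (D - 1), (xq n (k - 1) - xq n l)) := by
      intro k hk
      rw [Finset.mem_Icc] at hk
      have hk2 : k = (k - 1) + 1 := by omega
      rw [map_mul, map_mul, subst_C, map_prod]
      rw [hk2, subst_xq t (by omega) (by omega), ← hk2]
      congr 2
      have hc : ∀ l ∈ Icc (j + 1 + 1) D, subst t (xq (n + 1) k - xq (n + 1) l)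
          = xq n (k - 1) - xq n (l - 1) := by
        intro l hl
        rw [Finset.mem_Icc] at hl
        have hl2 : l = (l - 1) + 1 := by omega
        rw [map_sub, hk2, subst_xq t (by omega) (by omega), ← hk2]
        rw [hl2, subst_xq t (by omega) (by omega), ← hl2]
      rw [Finset.prod_congr rfl hc]
      exact prod_reindex (n := n) (xq n (k - 1)) (j + 1) D (by omega)
    rw [Finset.sum_congr rfl hterm]
    rw [show (j + 1) = j + 1 from rfl]
    have := sum_reindex (n := n)
      (fun k => C (c k) * (xq n (k - 1) * ∏ l ∈ Icc (j + 1) (D - 1), (xq n (k - 1) - xq n l))) j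
    rw [this]
    refine Finset.sum_congr rfl fun i hi => ?_
    simp

lemma subst_fgen_zero (c : ℕ → ℚ) (H : ℕ → ℕ) {j : ℕ}
    (hj1 : 1 ≤ j) (hjn : j ≤ n) (hH1 : j + 1 ≤ H (j + 1)) (hH2 : H (j + 1) ≤ n + 1) :
    subst (0 : P n) (fgen (n + 1) c H (j + 1))
      = fgen n (fun i => c (i + 1)) (fun i => H (i + 1) - 1) j := by
  rw [subst_fgen_expand c H 0 hj1 hjn hH1 hH2, fgen]
  simp only [zero_mul, mul_zero, zero_add]

lemma subst_fgen_X (c : ℕ → ℚ) (H : ℕ → ℕ) {m j : ℕ}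
    (hm2 : 2 ≤ m) (hj1 : 1 ≤ j) (hjn : j ≤ n)
    (hH1 : j + 1 ≤ H (j + 1)) (hH2 : H (j + 1) ≤ n + 1) (hmH : m ≤ H (j + 1)) :
    subst (xq n (m - 1)) (fgen (n + 1) c H (j + 1))
      = fgen n (fun i => c (i + 1) + if i + 1 = m then c 1 else 0)
          (fun i => H (i + 1) - 1) j := by
  rw [subst_fgen_expand c H _ hj1 hjn hH1 hH2, fgen]
  have key : ∀ i ∈ Icc 1 j,
      C (c (i + 1) + if i + 1 = m then c 1 else 0) *
          (xq n i * ∏ l ∈ Icc (j + 1) (H (j + 1) - 1), (xq n i - xq n l))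
        = C (c (i + 1)) * (xq n i * ∏ l ∈ Icc (j + 1) (H (j + 1) - 1), (xq n i - xq n l))
          + (if i = m - 1 then
              C (c 1) * (xq n i * ∏ l ∈ Icc (j + 1) (H (j + 1) - 1), (xq n i - xq n l))
            else 0) := by
    intro i hi
    rw [C_add, add_mul]
    congr 1
    by_cases hcase : i + 1 = m
    · rw [if_pos hcase, if_pos (by omega)]
    · rw [if_neg hcase, if_neg (by omega), C_0, zero_mul]
  rw [Finset.sum_congr rfl key, Finset.sum_add_distrib,
    Finset.sum_ite_eq' (Icc 1 j) (m - 1)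
      (fun i => C (c 1) * (xq n i * ∏ l ∈ Icc (j + 1) (H (j + 1) - 1), (xq n i - xq n l)))]
  rw [add_comm]
  congr 1
  by_cases hmem : m - 1 ∈ Icc 1 j
  · rw [if_pos hmem]
  · rw [if_neg hmem]
    rw [Finset.mem_Icc] at hmem
    have hzero : ∏ l ∈ Icc (j + 1) (H (j + 1) - 1), (xq n (m - 1) - xq n l) = 0 := by
      apply Finset.prod_eq_zero (i := m - 1)
      · rw [Finset.mem_Icc]
        omega
      · exact sub_self _
    rw [hzero, mul_zero, mul_zero]

lemma xq_one_eq_X0 : xq (n + 1) 1 = X 0 := by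
  rw [xq_eq le_rfl (by omega)]
  rfl

open RingTheory.Sequence in
/-- The main induction: every positively-weighted Hessenberg family is a regular sequence. -/
theorem gen_main : ∀ (N : ℕ) (c : ℕ → ℚ) (H : ℕ → ℕ),
    (∀ j, 1 ≤ j → j ≤ N → j ≤ H j ∧ H j ≤ N) →
    (∀ j, 1 ≤ j → j < N → H j ≤ H (j + 1)) →
    (∀ k, 1 ≤ k → k ≤ N → 0 < c k) →
    IsRegular (P N) ((List.range N).map fun j => fgen N c H (j + 1)) := by
  intro N
  induction N with
  | zero =>
    intro c H _ _ _
    simp only [List.range_zero, List.map_nil]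
    exact IsRegular.nil _ _
  | succ n ih =>
    intro c H hHa hHb hc
    have hmono : ∀ a b, 1 ≤ a → a ≤ b → b ≤ n + 1 → H a ≤ H b := by
      have key : ∀ d a, 1 ≤ a → a + d ≤ n + 1 → H a ≤ H (a + d) := by
        intro d
        induction d with
        | zero => intro a _ _; simp
        | succ d ihd =>
          intro a ha hb
          have h1 : H a ≤ H (a + d) := ihd a ha (by omega)
          have h2 : H (a + d) ≤ H (a + d + 1) := hHb (a + d) (by omega) (by omega)
          calc H a ≤ H (a + d) := h1
            _ ≤ H (a + (d + 1)) := by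
                rw [show a + (d + 1) = a + d + 1 by omega]
                exact h2
      intro a b ha hab hb
      have := key (b - a) a ha (by omega)
      rwa [show a + (b - a) = b by omega] at this
    have hlist : (List.range (n + 1)).map (fun j => fgen (n + 1) c H (j + 1))
        = (fgen (n + 1) c H 1) ::
            ((List.range n).map fun j => fgen (n + 1) c H (j + 2)) := by
      rw [List.range_succ_eq_map]
      simp only [List.map_cons, List.map_map]
      rfl
    rw [hlist]
    have hH11 : 1 ≤ H 1 := (hHa 1 le_rfl (by omega)).1
    have hH1n : H 1 ≤ n + 1 := (hHa 1 le_rfl (by omega)).2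
    have hc1 : (0 : ℚ) < c 1 := hc 1 le_rfl (by omega)
    have hF1 : fgen (n + 1) c H 1
        = (C (c 1) * xq (n + 1) 1) * ∏ m ∈ Icc 2 (H 1), (xq (n + 1) 1 - xq (n + 1) m) := by
      rw [fgen, Finset.Icc_self, Finset.sum_singleton]
      rw [show (1 : ℕ) + 1 = 2 from rfl]
      ring
    rw [hF1]
    apply isRegular_cons_prod
    · -- head factor : c₁ · x₁ ; quotient given by the substitution x₁ ↦ 0
      rw [isRegular_cons_iff]
      constructor
      · apply isSMulRegular_of_ne_zero
        exact mul_ne_zero (fun hC => hc1.ne' (by simpa using hC))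
          (by rw [xq_one_eq_X0]; exact X_ne_zero 0)
      · have hker : Ideal.span {C (c 1) * xq (n + 1) 1}
            = RingHom.ker (subst (0 : P n)).toRingHom := by
          rw [ker_subst, map_zero, sub_zero, xq_one_eq_X0]
          exact Ideal.span_singleton_mul_left_unit
            ((isUnit_iff_ne_zero.mpr hc1.ne').map (C : ℚ →+* P (n + 1))) _
        rw [isRegular_quot_iff (0 : P n) _ hker]
        have hmap : ((List.range n).map fun j => fgen (n + 1) c H (j + 2)).map
              (subst (0 : P n))
            = (List.range n).map fun j =>
                fgen n (fun i => c (i + 1)) (fun i => H (i + 1) - 1) (j + 1) := by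
          rw [List.map_map]
          refine List.map_congr_left fun j hj => ?_
          rw [List.mem_range] at hj
          have h1 : (j + 1) + 1 ≤ H ((j + 1) + 1) := (hHa (j + 2) (by omega) (by omega)).1
          have h2 : H ((j + 1) + 1) ≤ n + 1 := (hHa (j + 2) (by omega) (by omega)).2
          exact subst_fgen_zero c H (by omega) (by omega) h1 h2
        rw [hmap]
        exact ih (fun i => c (i + 1)) (fun i => H (i + 1) - 1)
          (fun j hj1 hjn => by
            have := hHa (j + 1) (by omega) (by omega)
            exact ⟨by show j ≤ H (j + 1) - 1; omega, by show H (j + 1) - 1 ≤ n; omega⟩)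
          (fun j hj1 hjn => by
            have := hHb (j + 1) (by omega) (by omega)
            show H (j + 1) - 1 ≤ H (j + 1 + 1) - 1
            have h1 := (hHa (j + 1) (by omega) (by omega)).1
            omega)
          (fun k hk1 hkn => hc (k + 1) (by omega) (by omega))
    · -- the factors x₁ - x_m, 2 ≤ m ≤ H 1
      intro m hm
      rw [Finset.mem_Icc] at hm
      have hxm : xq (n + 1) m = X (⟨m - 1, by omega⟩ : Fin (n + 1)) :=
        xq_eq (by omega) (by omega)
      rw [isRegular_cons_iff]
      constructor
      · apply isSMulRegular_of_ne_zero
        rw [xq_one_eq_X0, hxm]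
        refine sub_ne_zero.mpr (fun hXX => ?_)
        have hval : ((0 : Fin (n + 1)) : ℕ) = ((⟨m - 1, by omega⟩ : Fin (n + 1)) : ℕ) :=
          congrArg Fin.val (X_injective (R := ℚ) hXX)
        simp only [Fin.val_zero] at hval
        omega
      · have hker : Ideal.span {xq (n + 1) 1 - xq (n + 1) m}
            = RingHom.ker (subst (xq n (m - 1))).toRingHom := by
          rw [ker_subst, xq_one_eq_X0, hxm]
          congr 3
          rw [xq_eq (by omega : 1 ≤ m - 1) (by omega : m - 1 ≤ n), rename_X]
          congr 1
          ext
          simp only [Fin.val_succ]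
          omega
        rw [isRegular_quot_iff (xq n (m - 1)) _ hker]
        have hmap : ((List.range n).map fun j => fgen (n + 1) c H (j + 2)).map
              (subst (xq n (m - 1)))
            = (List.range n).map fun j =>
                fgen n (fun i => c (i + 1) + if i + 1 = m then c 1 else 0)
                  (fun i => H (i + 1) - 1) (j + 1) := by
          rw [List.map_map]
          refine List.map_congr_left fun j hj => ?_
          rw [List.mem_range] at hj
          have h1 : (j + 1) + 1 ≤ H ((j + 1) + 1) := (hHa (j + 2) (by omega) (by omega)).1
          have h2 : H ((j + 1) + 1) ≤ n + 1 := (hHa (j + 2) (by omega) (by omega)).2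
          have h3 : m ≤ H ((j + 1) + 1) :=
            le_trans hm.2 (hmono 1 (j + 2) le_rfl (by omega) (by omega))
          exact subst_fgen_X c H hm.1 (by omega) (by omega) h1 h2 h3
        rw [hmap]
        exact ih (fun i => c (i + 1) + if i + 1 = m then c 1 else 0)
          (fun i => H (i + 1) - 1)
          (fun j hj1 hjn => by
            have := hHa (j + 1) (by omega) (by omega)
            exact ⟨by show j ≤ H (j + 1) - 1; omega, by show H (j + 1) - 1 ≤ n; omega⟩)
          (fun j hj1 hjn => by
            have := hHb (j + 1) (by omega) (by omega)
            show H (j + 1) - 1 ≤ H (j + 1 + 1) - 1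
            have h1 := (hHa (j + 1) (by omega) (by omega)).1
            omega)
          (fun k hk1 hkn => by
            show 0 < c (k + 1) + if k + 1 = m then c 1 else 0
            have hpos := hc (k + 1) (by omega) (by omega)
            by_cases hcase : k + 1 = m
            · rw [if_pos hcase]
              exact add_pos hpos hc1
            · rw [if_neg hcase]
              simpa using hpos)

end Poly

end Stmt16

/-- For any Hessenberg function `h`, the polynomials `f̌_{h(1),1}, …, f̌_{h(n),n}` form a
regular sequence in `ℚ[x_1,…,x_n]`. -/
theorem stmt16 (n : ℕ) (h : ℕ → ℕ)
    (hH1 : ∀ j : ℕ, 1 ≤ j → j ≤ n → j ≤ h j ∧ h j ≤ n)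
    (hH2 : ∀ j : ℕ, 1 ≤ j → j < n → h j ≤ h (j + 1)) :
    RingTheory.Sequence.IsRegular (MvPolynomial (Fin n) ℚ)
      ((List.range n).map (fun j => fcheck n (h (j + 1)) (j + 1))) := by
  have hmain := Stmt16.gen_main n (fun _ => 1) h hH1 hH2 (fun k _ _ => one_pos)
  have hfe : ((List.range n).map fun j => Stmt16.fgen n (fun _ => 1) h (j + 1))
      = (List.range n).map (fun j => fcheck n (h (j + 1)) (j + 1)) := by
    refine List.map_congr_left fun j _ => ?_
    rw [Stmt16.fgen, fcheck]
    refine Finset.sum_congr rfl fun k _ => ?_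
    rw [MvPolynomial.C_1, one_mul]
  rwa [hfe] at hmain
end
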